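/- arXiv:2509.06880 — 7 statements merged into one kernel-verified Lean document; each statement's English description precedes it below -/
import Mathlib

section
/- Let G be a finite simple undirected graph and let C ⊆ V(G) be a set of vertices such that the induced subgraph G[C] is connected and |N[C]| > vi(G). Then every vi-set of G contains at least one vertex of N[C]. -/
namespace ParamReport

open SimpleGraph

variable {V : Type*} {U : Type*}

/-- The number of vertices in a largest connected component of `H` (`0` if `H` has no
vertices). -/
noncomputable def cc {W : Type*} (H : SimpleGraph W) : ℕ :=
  sSup {n | ∃ c : H.ConnectedComponent, n = c.supp.ncard}

/-- `cc` of the graph `G − S`, the subgraph of `G` induced on `V(G) \ S`. -/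
noncomputable def ccDel (G : SimpleGraph V) (S : Set V) : ℕ :=
  cc (G.induce Sᶜ)

/-- The vertex integrity `vi(G) = min { |X| + cc(G − X) : X ⊆ V(G) }`. -/
noncomputable def vi (G : SimpleGraph V) : ℕ :=
  sInf {n | ∃ X : Set V, n = X.ncard + ccDel G X}

/-- `X` is a vi-set of `G` if `vi(G) = |X| + cc(G − X)`. -/
def IsViSet (G : SimpleGraph V) (X : Set V) : Prop :=
  vi G = X.ncard + ccDel G X

/-- `S` is a modulator for `coc_r(G)`: every connected component of `G − S` has at most
`r` vertices, i.e. `cc(G − S) ≤ r`. -/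
def IsModulator (G : SimpleGraph V) (r : ℕ) (S : Set V) : Prop :=
  ccDel G S ≤ r

/-- `S` is a minimum-size modulator for `coc_r(G)`. -/
def IsMinModulator (G : SimpleGraph V) (r : ℕ) (S : Set V) : Prop :=
  IsModulator G r S ∧ ∀ T : Set V, IsModulator G r T → S.ncard ≤ T.ncard

/-- The `r`-component order connectivity number: the size of a smallest modulator for
`coc_r(G)`. -/
noncomputable def coc (G : SimpleGraph V) (r : ℕ) : ℕ :=
  sInf {n | ∃ S : Set V, IsModulator G r S ∧ n = S.ncard}

/-- The open neighborhood `N(X) = (⋃ v ∈ X, N(v)) \ X` of a vertex set `X`. -/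
def openNbhdSet (G : SimpleGraph V) (X : Set V) : Set V :=
  (⋃ v ∈ X, G.neighborSet v) \ X

/-- The closed neighborhood `N[X] = N(X) ∪ X` of a vertex set `X`. -/
def closedNbhdSet (G : SimpleGraph V) (X : Set V) : Set V :=
  openNbhdSet G X ∪ X

/-- A vertex `v ∈ S` is redundant with respect to `S` if at most one connected component
of `G − S` contains neighbors of `v`. -/
def Redundant (G : SimpleGraph V) (S : Set V) (v : V) : Prop :=
  Set.Subsingleton {c : (G.induce Sᶜ).ConnectedComponent | ∃ w, w ∈ c.supp ∧ G.Adj v ↑w}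

/-- The vertex connectivity of `G[X]`: the smallest size of a set `Z ⊆ X` such that
`G[X \ Z]` has more than one connected component. -/
noncomputable def conn (G : SimpleGraph V) (X : Set V) : ℕ :=
  sInf {r | ∃ Z ⊆ X, Z.ncard = r ∧ 1 < Nat.card ((G.induce (X \ Z)).ConnectedComponent)}

/-- A family `𝒞` of pairs `(C, cut(C))` of vertex sets is an `r`-cut decomposition of `G`. -/
def IsRCutDecomp (G : SimpleGraph V) (r : ℕ) (𝒞 : Set (Set V × Set V)) : Prop :=
  ∀ p ∈ 𝒞,
    p.1.ncard ≤ r ∧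
    p.2 ⊆ openNbhdSet G p.1 ∧
    p.2.ncard ≤ conn G (p.1 ∪ p.2) ∧
    ∀ q ∈ 𝒞, p.1 ∩ q.2 = ∅ ∨ q.1 ⊆ p.1

/-- All edges of `G` lie within the vertex set `A` (we model graphs with vertex set `A ⊆ U`
as simple graphs on the ambient type `U` whose edges are confined to `A`). -/
def EdgesWithin (G : SimpleGraph U) (A : Set U) : Prop :=
  ∀ u v, G.Adj u v → u ∈ A ∧ v ∈ A

/-- `(V1, V2)` is a split of the graph `G` with vertex set `A`: a partition of `A` into two
parts of size at least two such that all vertices of `V1` having at least one neighbor in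
`V2` have the same neighborhood in `V2`. -/
def IsSplit (G : SimpleGraph U) (A V1 V2 : Set U) : Prop :=
  V1 ∪ V2 = A ∧ Disjoint V1 V2 ∧ 2 ≤ V1.ncard ∧ 2 ≤ V2.ncard ∧
    ∀ u ∈ V1, ∀ w ∈ V1, (∃ a ∈ V2, G.Adj u a) → (∃ a ∈ V2, G.Adj w a) →
      ∀ a ∈ V2, (G.Adj u a ↔ G.Adj w a)

/-- `(G1, G2)` is a simple decomposition of the graph `G` (with vertex set `A`) with respect
to the split `(V1, V2)`, with marker vertex `x ∉ A`: `Gi` has vertex set `Vi ∪ {x}`,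
`Gi[Vi] = G[Vi]`, and in `Gi` the marker `x` is adjacent exactly to the vertices of `Vi`
that have a neighbor in the other part in `G`. -/
def IsSimpleDecompWrt (G : SimpleGraph U) (A V1 V2 : Set U)
    (G1 G2 : SimpleGraph U) (x : U) : Prop :=
  x ∉ A ∧
  EdgesWithin G1 (V1 ∪ {x}) ∧ EdgesWithin G2 (V2 ∪ {x}) ∧
  (∀ u ∈ V1, ∀ v ∈ V1, (G1.Adj u v ↔ G.Adj u v)) ∧
  (∀ u ∈ V2, ∀ v ∈ V2, (G2.Adj u v ↔ G.Adj u v)) ∧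
  (∀ u, G1.Adj x u ↔ u ∈ V1 ∧ ∃ w ∈ V2, G.Adj u w) ∧
  (∀ u, G2.Adj x u ↔ u ∈ V2 ∧ ∃ w ∈ V1, G.Adj u w)

/-- `u` and `w` are twins: `N(u) \ {w} = N(w) \ {u}`. -/
def IsTwin (G : SimpleGraph V) (u w : V) : Prop :=
  G.neighborSet u \ {w} = G.neighborSet w \ {u}

/-- The twin class of a vertex `u`. -/
def TwinClass (G : SimpleGraph V) (u : V) : Set V := {w | IsTwin G u w}

/-- The type of twin classes of `G`. -/
abbrev TwinClasses (G : SimpleGraph V) : Type _ := {C : Set V // ∃ u, C = TwinClass G u}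

/-- The twin-quotient graph `G_nd`: its vertices are the twin classes of `G`, and two
distinct classes `[u]` and `[v]` are adjacent iff `{u, v}` is an edge of `G`. -/
def twinQuotient (G : SimpleGraph V) : SimpleGraph (TwinClasses G) where
  Adj C D := C ≠ D ∧ ∃ u ∈ C.1, ∃ v ∈ D.1, G.Adj u v
  symm := by
    constructor
    rintro C D ⟨hne, u, hu, v, hv, h⟩
    exact ⟨hne.symm, v, hv, u, hu, h.symm⟩
  loopless := by
    constructor
    rintro C ⟨hne, -⟩
    exact hne rfl


/-- If `C ⊆ V(G)` induces a connected subgraph and `|N[C]| > vi(G)`, then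
every vi-set of `G` contains at least one vertex of `N[C]`. -/
theorem stmt_1 {V : Type*} [Fintype V] (G : SimpleGraph V) (C : Set V)
    (hC : (G.induce C).Connected)
    (hbig : vi G < (closedNbhdSet G C).ncard) :
    ∀ X : Set V, IsViSet G X → (X ∩ closedNbhdSet G C).Nonempty := by
  intro X hX
  by_contra hne
  have hsub : closedNbhdSet G C ⊆ Xᶜ := fun v hv hvX => hne ⟨v, hvX, hv⟩
  obtain ⟨c0⟩ := hC.nonempty
  have hc0N : (c0 : V) ∈ closedNbhdSet G C := Or.inr c0.2
  have reachC : ∀ w (hw : w ∈ C),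
      (G.induce Xᶜ).Reachable ⟨w, hsub (Or.inr hw)⟩ ⟨c0, hsub hc0N⟩ := by
    intro w hw
    have h1 : (G.induce C).Reachable ⟨w, hw⟩ c0 := hC.preconnected _ _
    let F : G.induce C →g G.induce Xᶜ :=
      ⟨fun a => ⟨a.1, hsub (Or.inr a.2)⟩, fun h => h⟩
    exact h1.map F
  have key : ∀ v (hv : v ∈ closedNbhdSet G C),
      (G.induce Xᶜ).Reachable ⟨v, hsub hv⟩ ⟨c0, hsub hc0N⟩ := by
    intro v hv
    rcases hv with hv | hv
    · obtain ⟨hv1, hv2⟩ := hv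
      simp only [Set.mem_iUnion] at hv1
      obtain ⟨u, hu, hadj⟩ := hv1
      have hadj' : (G.induce Xᶜ).Adj ⟨v, hsub (Or.inl ⟨by
          simp only [Set.mem_iUnion]; exact ⟨u, hu, hadj⟩, hv2⟩)⟩
          ⟨u, hsub (Or.inr hu)⟩ := by
        exact (G.mem_neighborSet u v).mp hadj |>.symm
      exact hadj'.reachable.trans (reachC u hu)
    · exact reachC v hv
  -- the connected component containing the image of C
  set H := G.induce Xᶜ with hH
  let c := H.connectedComponentMk ⟨c0, hsub hc0N⟩
  set S' : Set ↥Xᶜ := {v : ↥Xᶜ | (v : V) ∈ closedNbhdSet G C} with hS'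
  have hS'sub : S' ⊆ c.supp := by
    intro v hv
    have := key v hv
    rw [SimpleGraph.ConnectedComponent.mem_supp_iff]
    have hveq : (⟨(v : V), hsub hv⟩ : ↥Xᶜ) = v := Subtype.ext rfl
    rw [← hveq]
    exact SimpleGraph.ConnectedComponent.sound this
  have himg : Subtype.val '' S' = closedNbhdSet G C := by
    ext v
    constructor
    · rintro ⟨w, hw, rfl⟩; exact hw
    · intro hv; exact ⟨⟨v, hsub hv⟩, hv, rfl⟩
  have hcard1 : (closedNbhdSet G C).ncard = S'.ncard := by
    rw [← himg, Set.ncard_image_of_injective _ Subtype.val_injective]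
  have hcard2 : S'.ncard ≤ c.supp.ncard :=
    Set.ncard_le_ncard hS'sub (Set.toFinite _)
  have hbdd : BddAbove {n | ∃ d : H.ConnectedComponent, n = d.supp.ncard} := by
    refine ⟨Nat.card ↥Xᶜ, ?_⟩
    rintro n ⟨d, rfl⟩
    calc d.supp.ncard ≤ (Set.univ : Set ↥Xᶜ).ncard :=
          Set.ncard_le_ncard (Set.subset_univ _) (Set.toFinite _)
      _ = Nat.card ↥Xᶜ := Set.ncard_univ _
  have hcc : c.supp.ncard ≤ ccDel G X := le_csSup hbdd ⟨c, rfl⟩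
  have : (closedNbhdSet G C).ncard ≤ vi G := by
    rw [hX]
    omega
  omega

end ParamReport
end

section
/- Let G be a finite simple undirected graph and let S be a vi-set of G that contains no redundant vertex. Then S contains no simplicial vertex of G. -/
namespace ParamReport

open SimpleGraph

variable {V : Type*} {U : Type*}

/-- If `S` is a vi-set of `G` containing no redundant vertex, then `S`
contains no simplicial vertex of `G`. -/
theorem stmt_3 {V : Type*} [Fintype V] (G : SimpleGraph V) (S : Set V)
    (hS : IsViSet G S) (hnored : ∀ v ∈ S, ¬ Redundant G S v) :
    ∀ v ∈ S, ¬ G.IsClique (G.neighborSet v) := by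
  intro v hv hclique
  apply hnored v hv
  intro c1 hc1 c2 hc2
  obtain ⟨w1, hw1c, hw1adj⟩ := hc1
  obtain ⟨w2, hw2c, hw2adj⟩ := hc2
  by_cases h : w1 = w2
  · subst h
    rw [SimpleGraph.ConnectedComponent.mem_supp_iff] at hw1c hw2c
    rw [← hw1c, ← hw2c]
  · have hne : (w1 : V) ≠ (w2 : V) := fun he => h (Subtype.ext he)
    have hadj : G.Adj (w1 : V) (w2 : V) := hclique hw1adj hw2adj hne
    have hadj' : (G.induce Sᶜ).Adj w1 w2 := hadj
    rw [SimpleGraph.ConnectedComponent.mem_supp_iff] at hw1c hw2c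
    rw [← hw1c, ← hw2c]
    exact SimpleGraph.ConnectedComponent.sound hadj'.reachable

end ParamReport
end

section
/- Let G be a finite simple undirected graph and let S be a vi-set of G that contains no redundant vertex. Then for each pair of vertices v1, v2 ∈ V(G) with N(v1) \ S ⊆ N[v2], if v1 ∈ S then v2 ∈ S. -/
namespace ParamReport

open SimpleGraph

variable {V : Type*} {U : Type*}

/-- If `S` is a vi-set of `G` containing no redundant vertex, then for all
vertices `v1, v2` with `N(v1) \ S ⊆ N[v2]`, if `v1 ∈ S` then `v2 ∈ S`. -/
theorem stmt_4 {V : Type*} [Fintype V] (G : SimpleGraph V) (S : Set V)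
    (hS : IsViSet G S) (hnored : ∀ v ∈ S, ¬ Redundant G S v) :
    ∀ v1 v2 : V, G.neighborSet v1 \ S ⊆ insert v2 (G.neighborSet v2) →
      v1 ∈ S → v2 ∈ S := by
  intro v1 v2 hsub hv1
  by_contra hv2
  apply hnored v1 hv1
  have key : ∀ (u : ↥Sᶜ), G.Adj v1 ↑u →
      (G.induce Sᶜ).connectedComponentMk u
        = (G.induce Sᶜ).connectedComponentMk ⟨v2, hv2⟩ := by
    intro u hu
    have hmem : (u : V) ∈ insert v2 (G.neighborSet v2) := hsub ⟨hu, u.2⟩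
    rcases hmem with h | h
    · congr 1
      exact Subtype.ext h
    · exact SimpleGraph.ConnectedComponent.sound
        (SimpleGraph.Adj.reachable (by exact h.symm))
  rintro c ⟨w, hw, haw⟩ c' ⟨w', hw', haw'⟩
  rw [SimpleGraph.ConnectedComponent.mem_supp_iff] at hw hw'
  rw [← hw, ← hw', key w haw, key w' haw']

end ParamReport
end

section
/- Let G be a finite simple undirected graph, let r be a nonnegative integer, and let 𝒞 be an r-cut decomposition of G. Then there is a minimum-size modulator S for coc_r(G) such that for each pair (C, cut(C)) ∈ 𝒞 the following two conditions hold: (1) if N(C) \ S ⊆ cut(C) then C ∩ S = ∅; and (2) if N(C) \ S ⊆ cut(C) and |C| = r then cut(C) ⊆ S. -/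
namespace ParamReport

open SimpleGraph

variable {V : Type*} {U : Type*}

set_option linter.unusedSectionVars false

section StmtFiveAux

open Set

variable {V : Type*} [Fintype V]

lemma mem_openNbhdSet' {G : SimpleGraph V} {X : Set V} {v : V} :
    v ∈ openNbhdSet G X ↔ (∃ u ∈ X, G.Adj u v) ∧ v ∉ X := by
  simp [openNbhdSet, SimpleGraph.mem_neighborSet]

lemma supp_ncard_le_ccDel (G : SimpleGraph V) (S : Set V)
    (c : (G.induce Sᶜ).ConnectedComponent) : c.supp.ncard ≤ ccDel G S := by
  apply le_csSup
  · refine ⟨Fintype.card V, ?_⟩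
    rintro n ⟨d, rfl⟩
    calc d.supp.ncard ≤ (Set.univ : Set ↥(Sᶜ)).ncard :=
          ncard_le_ncard (subset_univ _) (toFinite _)
      _ = Nat.card ↥(Sᶜ) := ncard_univ _
      _ ≤ Nat.card V := Nat.card_le_card_of_injective _ Subtype.val_injective
      _ = Fintype.card V := Nat.card_eq_fintype_card
  · exact ⟨c, rfl⟩

lemma ccDel_le_of_forall {G : SimpleGraph V} {S : Set V} {r : ℕ}
    (h : ∀ c : (G.induce Sᶜ).ConnectedComponent, c.supp.ncard ≤ r) : ccDel G S ≤ r := by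
  show sSup _ ≤ r
  rcases Set.eq_empty_or_nonempty
      {n | ∃ c : (G.induce Sᶜ).ConnectedComponent, n = c.supp.ncard} with he | hne
  · rw [he, csSup_empty]; exact Nat.zero_le r
  · exact csSup_le hne (by rintro n ⟨c, rfl⟩; exact h c)

lemma isModulator_univ (G : SimpleGraph V) (r : ℕ) : IsModulator G r Set.univ := by
  apply ccDel_le_of_forall
  intro c
  obtain ⟨⟨v, hv⟩, -⟩ := c.exists_rep
  exact absurd (Set.mem_univ v) hv

lemma walk_support_mem_supp {W : Type*} {H : SimpleGraph W} :
    ∀ {x y : W} (w : H.Walk x y), ∀ z ∈ w.support,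
      H.connectedComponentMk z = H.connectedComponentMk x := by
  intro x y w
  induction w with
  | nil =>
    intro z hz
    rw [SimpleGraph.Walk.support_nil, List.mem_singleton] at hz
    rw [hz]
  | @cons a b c' hadj p ih =>
    intro z hz
    rw [SimpleGraph.Walk.support_cons, List.mem_cons] at hz
    rcases hz with h | h
    · rw [h]
    · exact (ih z h).trans (SimpleGraph.ConnectedComponent.sound hadj.reachable).symm

lemma reachable_induce_of_support {G : SimpleGraph V} {A B : Set V} :
    ∀ {x y : ↥A} (w : (G.induce A).Walk x y), (∀ z ∈ w.support, (z : V) ∈ B) →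
      ∀ (hx : (x : V) ∈ B) (hy : (y : V) ∈ B), (G.induce B).Reachable ⟨x, hx⟩ ⟨y, hy⟩ := by
  intro x y w
  induction w with
  | nil => intro h hx hy; exact SimpleGraph.Reachable.refl _
  | @cons a b c' hadj p ih =>
    intro h hx hy
    have hb : (b : V) ∈ B := by
      refine h b ?_
      rw [SimpleGraph.Walk.support_cons]
      exact List.mem_cons_of_mem _ p.start_mem_support
    have h1 : (G.induce B).Adj ⟨a, hx⟩ ⟨b, hb⟩ := hadj
    refine h1.reachable.trans (ih ?_ hb hy)
    intro z hz
    refine h z ?_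
    rw [SimpleGraph.Walk.support_cons]
    exact List.mem_cons_of_mem _ hz

lemma reachable_induce_mono {G : SimpleGraph V} {A B : Set V} (hAB : A ⊆ B) {x y : ↥A}
    (hr : (G.induce A).Reachable x y) :
    (G.induce B).Reachable ⟨x, hAB x.2⟩ ⟨y, hAB y.2⟩ := by
  obtain ⟨w⟩ := hr
  exact reachable_induce_of_support w (fun z _ => hAB z.2) _ _

lemma mem_region_of_walk {G : SimpleGraph V} {A R : Set V}
    (hcl : ∀ u v : V, u ∈ R → u ∈ A → v ∈ A → G.Adj u v → v ∈ R) :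
    ∀ {x y : ↥A}, (G.induce A).Walk x y → (x : V) ∈ R → (y : V) ∈ R := by
  intro x y w
  induction w with
  | nil => exact id
  | @cons a b c' hadj p ih =>
    intro hx
    exact ih (hcl a.1 b.1 hx a.2 b.2 hadj)

lemma exists_component_superset {G : SimpleGraph V} {S A : Set V} (hAS : A ⊆ Sᶜ)
    (hne : A.Nonempty) (hcard : Nat.card ((G.induce A).ConnectedComponent) ≤ 1) :
    ∃ c : (G.induce Sᶜ).ConnectedComponent, A ⊆ Subtype.val '' c.supp := by
  obtain ⟨a0, ha0⟩ := hne
  refine ⟨(G.induce Sᶜ).connectedComponentMk ⟨a0, hAS ha0⟩, fun a ha => ?_⟩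
  have hsub : Subsingleton ((G.induce A).ConnectedComponent) :=
    Finite.card_le_one_iff_subsingleton.mp hcard
  have h1 : (G.induce A).connectedComponentMk ⟨a, ha⟩
      = (G.induce A).connectedComponentMk ⟨a0, ha0⟩ := Subsingleton.elim _ _
  have hreach := SimpleGraph.ConnectedComponent.exact h1
  have h2 := reachable_induce_mono hAS hreach
  exact ⟨⟨a, hAS ha⟩, by
    rw [SimpleGraph.ConnectedComponent.mem_supp_iff]
    exact SimpleGraph.ConnectedComponent.sound h2, rfl⟩

lemma card_components_le_one {G : SimpleGraph V} {X Z : Set V} (hZX : Z ⊆ X)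
    (hlt : Z.ncard < conn G X) :
    Nat.card ((G.induce (X \ Z)).ConnectedComponent) ≤ 1 := by
  by_contra h
  push_neg at h
  have : conn G X ≤ Z.ncard := Nat.sInf_le ⟨Z, hZX, rfl, h⟩
  omega

lemma modulator_transfer {G : SimpleGraph V} {r : ℕ} {S S' R : Set V} (hS : ccDel G S ≤ r)
    (hcl : ∀ u v : V, u ∈ R → u ∉ S' → v ∉ S' → G.Adj u v → v ∈ R)
    (hSS' : ∀ u, u ∈ S → u ∉ R → u ∈ S')
    (hsize : (R \ S').ncard ≤ r) : ccDel G S' ≤ r := by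
  apply ccDel_le_of_forall
  intro c
  by_cases hmeet : ∃ x : ↥(S'ᶜ), x ∈ c.supp ∧ (x : V) ∈ R
  · obtain ⟨x1, hx1c, hx1R⟩ := hmeet
    have hsub : Subtype.val '' c.supp ⊆ R \ S' := by
      rintro - ⟨y, hyc, rfl⟩
      refine ⟨?_, y.2⟩
      rw [SimpleGraph.ConnectedComponent.mem_supp_iff] at hyc hx1c
      have hreach := SimpleGraph.ConnectedComponent.exact (hx1c.trans hyc.symm)
      obtain ⟨w⟩ := hreach
      exact mem_region_of_walk hcl w hx1R
    calc c.supp.ncard = (Subtype.val '' c.supp).ncard :=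
          (ncard_image_of_injective _ Subtype.val_injective).symm
      _ ≤ (R \ S').ncard := ncard_le_ncard hsub (toFinite _)
      _ ≤ r := hsize
  · push_neg at hmeet
    obtain ⟨x0, hx0⟩ := c.exists_rep
    have hx0c : x0 ∈ c.supp := by
      rw [SimpleGraph.ConnectedComponent.mem_supp_iff]; exact hx0
    have hnotS : ∀ x : ↥(S'ᶜ), x ∈ c.supp → (x : V) ∉ S := by
      intro x hx hxS
      exact x.2 (hSS' _ hxS (hmeet x hx))
    have hx0S : (x0 : V) ∈ Sᶜ := hnotS x0 hx0c
    set d := (G.induce Sᶜ).connectedComponentMk ⟨x0.1, hx0S⟩ with hd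
    have hsub : Subtype.val '' c.supp ⊆ Subtype.val '' d.supp := by
      rintro - ⟨y, hyc, rfl⟩
      have hyc' := hyc
      rw [SimpleGraph.ConnectedComponent.mem_supp_iff] at hyc'
      have hreach := SimpleGraph.ConnectedComponent.exact (hx0.trans hyc'.symm)
      obtain ⟨w⟩ := hreach
      have hsupp : ∀ z ∈ w.support, (z : V) ∈ Sᶜ := by
        intro z hz
        refine hnotS z ?_
        rw [SimpleGraph.ConnectedComponent.mem_supp_iff]
        exact (walk_support_mem_supp w z hz).trans hx0
      have h2 := reachable_induce_of_support w hsupp hx0S (hsupp y w.end_mem_support)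
      exact ⟨⟨y.1, _⟩, by
        rw [SimpleGraph.ConnectedComponent.mem_supp_iff, hd]
        exact (SimpleGraph.ConnectedComponent.sound h2).symm, rfl⟩
    calc c.supp.ncard = (Subtype.val '' c.supp).ncard :=
          (ncard_image_of_injective _ Subtype.val_injective).symm
      _ ≤ (Subtype.val '' d.supp).ncard := ncard_le_ncard hsub (toFinite _)
      _ = d.supp.ncard := ncard_image_of_injective _ Subtype.val_injective
      _ ≤ ccDel G S := supp_ncard_le_ccDel G S d
      _ ≤ r := hS

noncomputable def wght (𝒞 : Set (Set V × Set V)) (v : V) : ℕ := {q ∈ 𝒞 | v ∈ q.1}.ncard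

noncomputable def phi (𝒞 : Set (Set V × Set V)) (S : Set V) : ℕ :=
  ∑ v ∈ S.toFinite.toFinset, wght 𝒞 v

lemma phi_union (𝒞 : Set (Set V × Set V)) {A B : Set V} (h : Disjoint A B) :
    phi 𝒞 (A ∪ B) = phi 𝒞 A + phi 𝒞 B := by
  classical
  unfold phi
  have he : (A ∪ B).toFinite.toFinset = A.toFinite.toFinset ∪ B.toFinite.toFinset := by
    ext v; simp only [Set.Finite.mem_toFinset, Finset.mem_union, Set.mem_union]
  rw [he]
  exact Finset.sum_union (by
    rw [Finset.disjoint_left]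
    intro a ha hb
    simp only [Set.Finite.mem_toFinset] at ha hb
    exact Set.disjoint_left.mp h ha hb)

end StmtFiveAux

open Set

/-- For every `r`-cut decomposition `𝒞` of `G`, there is a minimum-size
modulator `S` for `coc_r(G)` such that for each pair `(C, cut(C)) ∈ 𝒞`:
(1) if `N(C) \ S ⊆ cut(C)` then `C ∩ S = ∅`; and
(2) if `N(C) \ S ⊆ cut(C)` and `|C| = r` then `cut(C) ⊆ S`. -/
theorem stmt_5 {V : Type*} [Fintype V] (G : SimpleGraph V) (r : ℕ)
    (𝒞 : Set (Set V × Set V)) (h𝒞 : IsRCutDecomp G r 𝒞) :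
    ∃ S : Set V, IsMinModulator G r S ∧
      ∀ p ∈ 𝒞,
        (openNbhdSet G p.1 \ S ⊆ p.2 → p.1 ∩ S = ∅) ∧
        (openNbhdSet G p.1 \ S ⊆ p.2 → p.1.ncard = r → p.2 ⊆ S) := by
  classical
  have hTne : {n | ∃ S : Set V, IsModulator G r S ∧ n = S.ncard}.Nonempty :=
    ⟨_, Set.univ, isModulator_univ G r, rfl⟩
  set n0 := sInf {n | ∃ S : Set V, IsModulator G r S ∧ n = S.ncard} with hn0
  obtain ⟨S0, hS0m, hS0n⟩ := Nat.sInf_mem hTne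
  have hPne : {n | ∃ S : Set V, (IsModulator G r S ∧ S.ncard = n0) ∧ n = phi 𝒞 S}.Nonempty :=
    ⟨_, S0, ⟨hS0m, hS0n.symm⟩, rfl⟩
  obtain ⟨S, ⟨hSmod, hSn⟩, hSphi⟩ := Nat.sInf_mem hPne
  have hmin : ∀ T : Set V, IsModulator G r T → n0 ≤ T.ncard := fun T hT => Nat.sInf_le ⟨T, hT, rfl⟩
  have hphimin : ∀ T : Set V, IsModulator G r T → T.ncard ≤ n0 → phi 𝒞 S ≤ phi 𝒞 T := by
    intro T hT hTn
    rw [← hSphi]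
    exact Nat.sInf_le ⟨T, ⟨hT, le_antisymm hTn (hmin T hT)⟩, rfl⟩
  have key : ∀ p ∈ 𝒞, openNbhdSet G p.1 \ S ⊆ p.2 → p.1 ∩ S = ∅ := by
    intro p hp hN
    by_contra hne
    obtain ⟨u0, hu0⟩ := Set.nonempty_iff_ne_empty.mpr hne
    obtain ⟨hCr, hcutN, hconn, hlam⟩ := h𝒞 p hp
    set C := p.1 with hC
    set cut := p.2 with hcut
    have hCcut : ∀ v ∈ cut, v ∉ C := fun v hv => (mem_openNbhdSet'.mp (hcutN hv)).2
    set m := (C ∩ S).ncard with hm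
    have hmpos : 1 ≤ m := (ncard_pos (toFinite _)).mpr ⟨u0, hu0⟩
    have w_ge : ∀ u ∈ C, 1 ≤ wght 𝒞 u := by
      intro u hu
      exact (ncard_pos (toFinite _)).mpr ⟨p, ⟨hp, hu⟩⟩
    have w_lt : ∀ u ∈ C, ∀ v ∈ cut, wght 𝒞 v < wght 𝒞 u := by
      intro u hu v hv
      have hsub : {q ∈ 𝒞 | v ∈ q.1} ⊆ {q ∈ 𝒞 | u ∈ q.1} \ {p} := by
        rintro q ⟨hq, hvq⟩
        rcases (h𝒞 q hq).2.2.2 p hp with hdisj | hsubC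
        · exact absurd hdisj (by
            rw [Set.eq_empty_iff_forall_notMem]
            push_neg
            exact ⟨v, hvq, hv⟩)
        · refine ⟨⟨hq, hsubC hu⟩, ?_⟩
          simp only [Set.mem_singleton_iff]
          rintro rfl
          exact hCcut v hv hvq
      calc wght 𝒞 v ≤ ({q ∈ 𝒞 | u ∈ q.1} \ {p}).ncard := ncard_le_ncard hsub (toFinite _)
        _ < {q ∈ 𝒞 | u ∈ q.1}.ncard := ncard_diff_singleton_lt_of_mem ⟨hp, hu⟩ (toFinite _)
    have main : ∀ X ⊆ cut \ S, X.ncard ≤ m → ccDel G ((S \ C) ∪ X) ≤ r → False := by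
      intro X hX hXm hmod
      have hdisj : Disjoint (S \ C) X := by
        rw [Set.disjoint_right]
        intro a haX haS
        exact (hX haX).2 haS.1
      have hsc0 : S \ C = S \ (C ∩ S) := by
        ext a
        simp only [Set.mem_diff, Set.mem_inter_iff]
        tauto
      have hSC : (S \ C).ncard = S.ncard - m := by
        rw [hm, hsc0]
        exact ncard_diff inter_subset_right (toFinite _)
      have hmS : m ≤ S.ncard := by
        rw [hm]
        exact ncard_le_ncard inter_subset_right (toFinite _)
      have hS'card : ((S \ C) ∪ X).ncard ≤ n0 := by
        rw [ncard_union_eq hdisj (toFinite _) (toFinite _), hSC]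
        omega
      have hle := hphimin _ hmod hS'card
      have hdisj0 : Disjoint (S \ C) (S ∩ C) := by
        rw [Set.disjoint_right]
        intro a ha hb
        exact hb.2 ha.2
      have h1 : phi 𝒞 S = phi 𝒞 (S \ C) + phi 𝒞 (S ∩ C) := by
        conv_lhs => rw [← Set.diff_union_inter S C]
        exact phi_union 𝒞 hdisj0
      have h2 : phi 𝒞 ((S \ C) ∪ X) = phi 𝒞 (S \ C) + phi 𝒞 X := phi_union 𝒞 hdisj
      have hstrict : phi 𝒞 X < phi 𝒞 (S ∩ C) := by
        obtain ⟨b, hb, hbmin⟩ := Finset.exists_min_image ((S ∩ C).toFinite.toFinset) (wght 𝒞)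
          ⟨u0, by rw [Set.Finite.mem_toFinset]; exact ⟨hu0.2, hu0.1⟩⟩
        have hbC : b ∈ C := ((S ∩ C).toFinite.mem_toFinset.mp hb).2
        have hb1 : 1 ≤ wght 𝒞 b := w_ge b hbC
        obtain ⟨c0, hc0⟩ : ∃ c0, wght 𝒞 b = c0 + 1 := ⟨wght 𝒞 b - 1, by omega⟩
        have hs1 : phi 𝒞 X ≤ X.ncard * c0 := by
          have h := Finset.sum_le_card_nsmul (X.toFinite.toFinset) (wght 𝒞) c0 ?_
          · rw [smul_eq_mul] at h
            rw [show X.toFinite.toFinset.card = X.ncard from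
              (ncard_eq_toFinset_card X (toFinite X)).symm] at h
            exact h
          · intro x hx
            have hx' := X.toFinite.mem_toFinset.mp hx
            have := w_lt b hbC x (hX hx').1
            omega
        have hs2 : m * (c0 + 1) ≤ phi 𝒞 (S ∩ C) := by
          have h := Finset.card_nsmul_le_sum ((S ∩ C).toFinite.toFinset) (wght 𝒞) (wght 𝒞 b) hbmin
          rw [smul_eq_mul, show ((S ∩ C).toFinite.toFinset).card = m from by
            rw [← ncard_eq_toFinset_card _ (toFinite _), hm, Set.inter_comm], hc0] at h
          exact h
        calc phi 𝒞 X ≤ X.ncard * c0 := hs1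
          _ ≤ m * c0 := Nat.mul_le_mul_right _ hXm
          _ < m * (c0 + 1) := by rw [Nat.mul_succ]; omega
          _ ≤ phi 𝒞 (S ∩ C) := hs2
      omega
    by_cases hcase : (cut \ S).ncard ≤ m
    · refine main (cut \ S) Set.Subset.rfl hcase ?_
      refine modulator_transfer (R := C) hSmod ?_ ?_ ?_
      · intro u v huC huS' hvS' hadj
        by_contra hvC
        have hvN : v ∈ openNbhdSet G C := mem_openNbhdSet'.mpr ⟨⟨u, huC, hadj⟩, hvC⟩
        have hvS : v ∉ S := fun hvS => hvS' (Set.mem_union_left _ ⟨hvS, hvC⟩)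
        exact hvS' (Set.mem_union_right _ ⟨hN ⟨hvN, hvS⟩, hvS⟩)
      · intro u huS huC
        exact Set.mem_union_left _ ⟨huS, huC⟩
      · exact le_trans (ncard_le_ncard diff_subset (toFinite _)) hCr
    · push_neg at hcase
      set Z := S ∩ (C ∪ cut) with hZ
      have hZsub : Z ⊆ C ∪ cut := inter_subset_right
      have hZcard : Z.ncard < cut.ncard := by
        have e1 : Z = (S ∩ C) ∪ (S ∩ cut) := by rw [hZ, Set.inter_union_distrib_left]
        have hdisj1 : Disjoint (S ∩ C) (S ∩ cut) := by
          rw [Set.disjoint_right]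
          intro a ha hb
          exact hCcut a ha.2 hb.2
        have e2 : Z.ncard = m + (S ∩ cut).ncard := by
          rw [e1, ncard_union_eq hdisj1 (toFinite _) (toFinite _), Set.inter_comm S C, ← hm]
        have hdisj2 : Disjoint (cut \ S) (S ∩ cut) := by
          rw [Set.disjoint_right]
          intro a ha hb
          exact hb.2 ha.1
        have e3 : cut.ncard = (cut \ S).ncard + (S ∩ cut).ncard := by
          rw [← ncard_union_eq hdisj2 (toFinite _) (toFinite _)]
          congr 1
          ext a
          simp only [Set.mem_union, Set.mem_diff, Set.mem_inter_iff]
          tauto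
        omega
      have hZconn : Z.ncard < conn G (C ∪ cut) := lt_of_lt_of_le hZcard hconn
      have hAeq : (C ∪ cut) \ Z = (C ∪ cut) \ S := by
        ext a
        simp only [hZ, Set.mem_diff, Set.mem_inter_iff]
        tauto
      have hAS : (C ∪ cut) \ S ⊆ Sᶜ := fun a ha => ha.2
      have hcut_ne : (cut \ S).Nonempty := by
        rw [← ncard_pos (toFinite _)]
        omega
      have hAne : ((C ∪ cut) \ S).Nonempty := hcut_ne.mono (fun a ha => ⟨Or.inr ha.1, ha.2⟩)
      have hcomps := card_components_le_one hZsub hZconn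
      rw [hAeq] at hcomps
      obtain ⟨c, hcsub⟩ := exists_component_superset hAS hAne hcomps
      set D := Subtype.val '' c.supp with hD
      have hDS : ∀ a ∈ D, a ∉ S := by
        rintro - ⟨y, hy, rfl⟩
        exact y.2
      have hDcard : D.ncard ≤ r := by
        rw [hD, ncard_image_of_injective _ Subtype.val_injective]
        exact le_trans (supp_ncard_le_ccDel G S c) hSmod
      have hDclosed : ∀ u v : V, u ∈ D → v ∉ S → G.Adj u v → v ∈ D := by
        rintro - v ⟨y, hy, rfl⟩ hvS hadj
        refine ⟨⟨v, hvS⟩, ?_, rfl⟩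
        rw [SimpleGraph.ConnectedComponent.mem_supp_iff] at hy ⊢
        rw [← hy]
        exact SimpleGraph.ConnectedComponent.sound
          (SimpleGraph.Adj.reachable (show (G.induce Sᶜ).Adj ⟨v, hvS⟩ y from hadj.symm))
      have hCsubD : C \ S ⊆ D := fun a ha => hcsub ⟨Or.inl ha.1, ha.2⟩
      have hcutsubD : cut \ S ⊆ D := fun a ha => hcsub ⟨Or.inr ha.1, ha.2⟩
      have hDr : r ≤ D.ncard := by
        by_contra hlt
        push_neg at hlt
        have hmod2 : ccDel G (S \ {u0}) ≤ r := by
          refine modulator_transfer (R := insert u0 D) hSmod ?_ ?_ ?_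
          · intro u v huR huS' hvS' hadj
            have hvS : v ∉ S ∨ v = u0 := by
              by_cases h : v = u0
              · exact Or.inr h
              · exact Or.inl (fun hvS => hvS' ⟨hvS, h⟩)
            rcases hvS with hvS | rfl
            · rcases Set.mem_insert_iff.mp huR with heq | huD
              · by_cases hvC : v ∈ C
                · exact Set.mem_insert_iff.mpr (Or.inr (hCsubD ⟨hvC, hvS⟩))
                · have huC : u ∈ C := by rw [heq]; exact hu0.1
                  have hvN : v ∈ openNbhdSet G C := mem_openNbhdSet'.mpr ⟨⟨u, huC, hadj⟩, hvC⟩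
                  exact Set.mem_insert_iff.mpr (Or.inr (hcutsubD ⟨hN ⟨hvN, hvS⟩, hvS⟩))
              · exact Set.mem_insert_iff.mpr (Or.inr (hDclosed u v huD hvS hadj))
            · exact Set.mem_insert _ _
          · intro u huS huR
            exact ⟨huS, fun h => huR (by rw [Set.mem_singleton_iff] at h; rw [h]; exact Set.mem_insert _ _)⟩
          · calc ((insert u0 D) \ (S \ {u0})).ncard ≤ (insert u0 D).ncard :=
                  ncard_le_ncard diff_subset (toFinite _)
              _ ≤ D.ncard + 1 := ncard_insert_le _ _
              _ ≤ r := by omega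
        have h6 := hmin _ hmod2
        have hlt2 : (S \ {u0}).ncard < S.ncard := ncard_diff_singleton_lt_of_mem hu0.2 (toFinite _)
        omega
      obtain ⟨X, hXsub, hXcard⟩ : ∃ X ⊆ cut \ S, X.ncard = m :=
        Set.exists_subset_card_eq (le_of_lt hcase)
      refine main X hXsub (le_of_eq hXcard) ?_
      refine modulator_transfer (R := C ∪ D) hSmod ?_ ?_ ?_
      · intro u v huR huS' hvS' hadj
        by_cases hvS : v ∈ S
        · left
          by_contra hvC
          exact hvS' (Set.mem_union_left _ ⟨hvS, hvC⟩)
        · rcases huR with huC | huD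
          · by_cases hvC : v ∈ C
            · exact Or.inl hvC
            · have hvN : v ∈ openNbhdSet G C := mem_openNbhdSet'.mpr ⟨⟨u, huC, hadj⟩, hvC⟩
              exact Or.inr (hcutsubD ⟨hN ⟨hvN, hvS⟩, hvS⟩)
          · exact Or.inr (hDclosed u v huD hvS hadj)
      · intro u huS huR
        exact Set.mem_union_left _ ⟨huS, fun h => huR (Or.inl h)⟩
      · have hCD : C ∪ D = D ∪ (C ∩ S) := by
          ext a
          constructor
          · rintro (haC | haD)
            · by_cases haS : a ∈ S
              · exact Or.inr ⟨haC, haS⟩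
              · exact Or.inl (hCsubD ⟨haC, haS⟩)
            · exact Or.inl haD
          · rintro (haD | haCS)
            · exact Or.inr haD
            · exact Or.inl haCS.1
        have hdisj2 : Disjoint D (C ∩ S) := by
          rw [Set.disjoint_left]
          intro a haD haCS
          exact hDS a haD haCS.2
        have hCDcard : (C ∪ D).ncard = D.ncard + m := by
          rw [hCD, ncard_union_eq hdisj2 (toFinite _) (toFinite _), hm, Set.inter_comm]
        have hXsubCD : X ⊆ C ∪ D := fun a ha => Or.inr (hcutsubD (hXsub ha))
        calc ((C ∪ D) \ ((S \ C) ∪ X)).ncard ≤ ((C ∪ D) \ X).ncard :=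
              ncard_le_ncard (Set.diff_subset_diff_right Set.subset_union_right) (toFinite _)
          _ = (C ∪ D).ncard - X.ncard := ncard_diff hXsubCD (toFinite _)
          _ ≤ r := by rw [hCDcard, hXcard]; omega
  refine ⟨S, ⟨hSmod, fun T hT => by rw [hSn]; exact hmin T hT⟩, ?_⟩
  intro p hp
  refine ⟨key p hp, ?_⟩
  intro hNp hCr2
  intro v hv
  by_contra hvS
  obtain ⟨hCr', hcutN, hconn, -⟩ := h𝒞 p hp
  have hCS := key p hp hNp
  have hCcut : ∀ w ∈ p.2, w ∉ p.1 := fun w hw => (mem_openNbhdSet'.mp (hcutN hw)).2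
  set Z := S ∩ (p.1 ∪ p.2) with hZ
  have hZcard : Z.ncard < p.2.ncard := by
    have hZeq : Z = S ∩ p.2 := by
      rw [hZ]
      ext a
      simp only [Set.mem_inter_iff, Set.mem_union]
      constructor
      · rintro ⟨haS, haC | hacut⟩
        · exact absurd (Set.mem_inter haC haS) (by rw [hCS]; exact Set.notMem_empty a)
        · exact ⟨haS, hacut⟩
      · rintro ⟨haS, hacut⟩
        exact ⟨haS, Or.inr hacut⟩
    rw [hZeq]
    refine ncard_lt_ncard ⟨inter_subset_right, ?_⟩ (toFinite _)
    intro hsub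
    exact hvS (hsub hv).1
  have hZconn := lt_of_lt_of_le hZcard hconn
  have hcomps := card_components_le_one (inter_subset_right : Z ⊆ p.1 ∪ p.2) hZconn
  have hAeq : (p.1 ∪ p.2) \ Z = (p.1 ∪ p.2) \ S := by
    ext a
    simp only [hZ, Set.mem_diff, Set.mem_inter_iff]
    tauto
  rw [hAeq] at hcomps
  have hAS : (p.1 ∪ p.2) \ S ⊆ Sᶜ := fun a ha => ha.2
  have hAne : ((p.1 ∪ p.2) \ S).Nonempty := ⟨v, Or.inr hv, hvS⟩
  obtain ⟨c, hcsub⟩ := exists_component_superset hAS hAne hcomps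
  have h1 : (insert v p.1).ncard ≤ ((p.1 ∪ p.2) \ S).ncard := by
    refine ncard_le_ncard ?_ (toFinite _)
    intro a ha
    rcases Set.mem_insert_iff.mp ha with rfl | haC
    · exact ⟨Or.inr hv, hvS⟩
    · exact ⟨Or.inl haC, fun haS =>
        absurd (Set.mem_inter haC haS) (by rw [hCS]; exact Set.notMem_empty a)⟩
  have h2 : ((p.1 ∪ p.2) \ S).ncard ≤ r := by
    calc ((p.1 ∪ p.2) \ S).ncard ≤ (Subtype.val '' c.supp).ncard :=
          ncard_le_ncard hcsub (toFinite _)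
      _ = c.supp.ncard := ncard_image_of_injective _ Subtype.val_injective
      _ ≤ r := le_trans (supp_ncard_le_ccDel G S c) hSmod
  have h3 : (insert v p.1).ncard = r + 1 := by
    rw [ncard_insert_of_notMem (hCcut v hv) (toFinite _), hCr2]
  omega


end ParamReport
end

section
/- Let G be a finite simple undirected graph and, for each integer r with 1 ≤ r ≤ |V(G)|, let 𝒞_r be an r-cut decomposition of G. Then there exists a vi-set S of G satisfying: (1) S contains no redundant vertex; and (2) there exists an integer r such that S is a minimum-size modulator for coc_r(G) and for each pair (C, cut(C)) ∈ 𝒞_r the following hold: if N(C) \ S ⊆ cut(C) then C ∩ S = ∅, and if N(C) \ S ⊆ cut(C) and |C| = r then cut(C) ⊆ S. -/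
namespace ParamReport

open SimpleGraph

variable {V : Type*} {U : Type*}

/-! ### Auxiliary lemmas for `stmt_6` -/

section StmtSixHelpers

set_option linter.unusedSectionVars false

variable {W : Type*} {G : SimpleGraph W}

lemma mem_openNbhdSet'_s6 {C : Set W} {b : W} :
    b ∈ openNbhdSet G C ↔ (∃ a ∈ C, G.Adj a b) ∧ b ∉ C := by
  simp [openNbhdSet, SimpleGraph.mem_neighborSet]

/-- supp of a component of `G − T`, as a set of `W`. -/
def suppV (G : SimpleGraph W) (T : Set W) (c : (G.induce Tᶜ).ConnectedComponent) : Set W :=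
  Subtype.val '' c.supp

lemma mem_suppV {T : Set W} {c : (G.induce Tᶜ).ConnectedComponent} {w : W} :
    w ∈ suppV G T c ↔ ∃ hw : w ∈ Tᶜ, (G.induce Tᶜ).connectedComponentMk ⟨w, hw⟩ = c := by
  constructor
  · rintro ⟨x, hx, rfl⟩
    exact ⟨x.2, by rwa [Subtype.coe_eta, ← ConnectedComponent.mem_supp_iff]⟩
  · rintro ⟨hw, h⟩
    exact ⟨⟨w, hw⟩, (ConnectedComponent.mem_supp_iff _ _).mpr h, rfl⟩

lemma suppV_subset_compl {T : Set W} {c : (G.induce Tᶜ).ConnectedComponent} :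
    suppV G T c ⊆ Tᶜ := by
  rintro _ ⟨x, _, rfl⟩; exact x.2

lemma ncard_suppV {T : Set W} (c : (G.induce Tᶜ).ConnectedComponent) :
    (suppV G T c).ncard = c.supp.ncard :=
  Set.ncard_image_of_injective _ Subtype.val_injective

lemma cc_le_iff {X : Type*} [Finite X] {H : SimpleGraph X} {n : ℕ} :
    cc H ≤ n ↔ ∀ c : H.ConnectedComponent, c.supp.ncard ≤ n := by
  have hbdd : BddAbove {k | ∃ c : H.ConnectedComponent, k = c.supp.ncard} := by
    refine ⟨Nat.card X, ?_⟩
    rintro k ⟨c, rfl⟩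
    simpa [Set.ncard_univ] using Set.ncard_le_ncard (Set.subset_univ c.supp) (Set.toFinite _)
  constructor
  · intro h c
    exact le_trans (le_csSup hbdd ⟨c, rfl⟩) h
  · intro h
    rcases Set.eq_empty_or_nonempty {k | ∃ c : H.ConnectedComponent, k = c.supp.ncard} with he | hne
    · simp [cc, he]
    · exact csSup_le hne (by rintro k ⟨c, rfl⟩; exact h c)

lemma absorb_walk {T A : Set W} {c : (G.induce Tᶜ).ConnectedComponent}
    (hA : ∀ a ∈ A, ∀ b, G.Adj a b → ∀ hb : b ∈ Tᶜ,
      (G.induce Tᶜ).connectedComponentMk ⟨b, hb⟩ = c → b ∈ A) :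
    ∀ {v w : ↥Tᶜ}, (G.induce Tᶜ).Walk v w → (v : W) ∈ A →
      (G.induce Tᶜ).connectedComponentMk v = c → (w : W) ∈ A := by
  intro v w p
  induction p with
  | nil => exact fun hv _ => hv
  | @cons u x w h p ih =>
    intro hu huc
    have hadj : G.Adj ↑u ↑x := h
    have hxc : (G.induce Tᶜ).connectedComponentMk x = c := by
      rw [← huc]
      exact (ConnectedComponent.eq).mpr (SimpleGraph.Adj.reachable h.symm)
    exact ih (by rw [← Subtype.coe_eta x x.2] at hxc
                 exact hA u hu x hadj x.2 hxc) hxc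

/-- strong-absorption subset lemma -/
lemma suppV_subset_of_absorb {T A : Set W} {c : (G.induce Tᶜ).ConnectedComponent}
    (hex : ∃ x, x ∈ suppV G T c ∧ x ∈ A)
    (hA : ∀ a ∈ A, ∀ b, G.Adj a b → ∀ hb : b ∈ Tᶜ,
      (G.induce Tᶜ).connectedComponentMk ⟨b, hb⟩ = c → b ∈ A) :
    suppV G T c ⊆ A := by
  obtain ⟨x, hxc, hxA⟩ := hex
  obtain ⟨hx, hxeq⟩ := mem_suppV.mp hxc
  intro w hw
  obtain ⟨hw', hweq⟩ := mem_suppV.mp hw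
  have hreach : (G.induce Tᶜ).Reachable ⟨x, hx⟩ ⟨w, hw'⟩ :=
    (ConnectedComponent.eq).mp (hxeq.trans hweq.symm)
  obtain ⟨p⟩ := hreach
  exact absorb_walk hA p hxA hxeq

/-- weak-absorption subset lemma -/
lemma suppV_subset_of_absorb' {T A : Set W} {c : (G.induce Tᶜ).ConnectedComponent}
    (hex : ∃ x, x ∈ suppV G T c ∧ x ∈ A)
    (hA : ∀ a ∈ A, ∀ b, G.Adj a b → b ∉ T → b ∈ A) :
    suppV G T c ⊆ A :=
  suppV_subset_of_absorb hex (fun a ha b hab hb _ => hA a ha b hab hb)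

lemma adj_mem_suppV {S : Set W} {c : (G.induce Sᶜ).ConnectedComponent} {a b : W}
    (ha : a ∈ suppV G S c) (hb : b ∉ S) (hadj : G.Adj a b) : b ∈ suppV G S c := by
  obtain ⟨ha', haeq⟩ := mem_suppV.mp ha
  refine mem_suppV.mpr ⟨hb, ?_⟩
  rw [← haeq]
  exact (ConnectedComponent.eq).mpr
    (SimpleGraph.Adj.reachable (show (G.induce Sᶜ).Adj ⟨b,hb⟩ ⟨a,ha'⟩ from hadj.symm))

lemma suppV_nonempty {T : Set W} (c : (G.induce Tᶜ).ConnectedComponent) :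
    ∃ v, v ∈ suppV G T c := by
  obtain ⟨v, hv⟩ := c.exists_rep
  exact ⟨↑v, mem_suppV.mpr ⟨v.2, by rw [Subtype.coe_eta]; exact hv⟩⟩

/-- inclusion homomorphism between induced subgraphs -/
def inclHom {A B : Set W} (G : SimpleGraph W) (hAB : A ⊆ B) : G.induce A →g G.induce B where
  toFun := fun x => ⟨x, hAB x.2⟩
  map_rel' := fun hab => hab

lemma reachable_mono {A B : Set W} (hAB : A ⊆ B) {u w : ↥A}
    (h : (G.induce A).Reachable u w) :
    (G.induce B).Reachable ⟨u, hAB u.2⟩ ⟨w, hAB w.2⟩ :=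
  h.map (inclHom G hAB)

lemma reachable_of_card_le {A : Set W} [Finite W]
    (h : Nat.card (G.induce A).ConnectedComponent ≤ 1) (u w : ↥A) :
    (G.induce A).Reachable u w := by
  have : Subsingleton (G.induce A).ConnectedComponent :=
    Finite.card_le_one_iff_subsingleton.mp h
  exact (ConnectedComponent.eq).mp (Subsingleton.elim _ _)

variable [Fintype W]

lemma ccDel_le_iff {T : Set W} {n : ℕ} :
    ccDel G T ≤ n ↔ ∀ c : (G.induce Tᶜ).ConnectedComponent, (suppV G T c).ncard ≤ n := by
  unfold ccDel
  rw [cc_le_iff]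
  exact forall_congr' fun c => by rw [ncard_suppV]

lemma suppV_ncard_le {T : Set W} (c : (G.induce Tᶜ).ConnectedComponent) :
    (suppV G T c).ncard ≤ ccDel G T :=
  (ccDel_le_iff.mp le_rfl) c

lemma vi_le (G : SimpleGraph W) (X : Set W) : vi G ≤ X.ncard + ccDel G X :=
  Nat.sInf_le ⟨X, rfl⟩

lemma exists_viset (G : SimpleGraph W) : ∃ S : Set W, IsViSet G S := by
  have hne : {n | ∃ X : Set W, n = X.ncard + ccDel G X}.Nonempty := ⟨_, ∅, rfl⟩
  obtain ⟨X, hX⟩ := Nat.sInf_mem hne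
  exact ⟨X, hX⟩

/-- The key exchange: replacing `S ∩ (C ∪ cut)` by `cut` keeps all components of size
at most `r`, provided `N(C) \ S ⊆ cut` and `|C| ≤ r` and `ccDel G S ≤ r`. -/
lemma ccDel_swap {S C cut : Set W} {r : ℕ}
    (hS : ccDel G S ≤ r)
    (hCr : C.ncard ≤ r)
    (hcut : cut ⊆ openNbhdSet G C)
    (hN : openNbhdSet G C \ S ⊆ cut) :
    ccDel G ((S \ (C ∪ cut)) ∪ cut) ≤ r := by
  set X := C ∪ cut with hX
  set T := (S \ X) ∪ cut with hT
  -- leaving C in G − T is impossible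
  have hesc : ∀ a ∈ C, ∀ b, G.Adj a b → b ∉ T → b ∈ C := by
    intro a ha b hab hbT
    by_contra hbC
    have hbN : b ∈ openNbhdSet G C := mem_openNbhdSet'_s6.mpr ⟨⟨a, ha, hab⟩, hbC⟩
    by_cases hbS : b ∈ S
    · by_cases hbX : b ∈ X
      · rcases hbX with hbX | hbX
        · exact hbC hbX
        · exact hbT (Or.inr hbX)
      · exact hbT (Or.inl ⟨hbS, hbX⟩)
    · exact hbT (Or.inr (hN ⟨hbN, hbS⟩))
  have hST : S ⊆ T ∪ C := by
    intro s hs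
    by_cases hsX : s ∈ X
    · rcases hsX with h | h
      · exact Or.inr h
      · exact Or.inl (Or.inr h)
    · exact Or.inl (Or.inl ⟨hs, hsX⟩)
  rw [ccDel_le_iff]
  intro c
  by_cases hc : ∃ x, x ∈ suppV G T c ∧ x ∈ C
  · have hsub : suppV G T c ⊆ C := suppV_subset_of_absorb' hc hesc
    exact le_trans (Set.ncard_le_ncard hsub (Set.toFinite _)) hCr
  · push_neg at hc
    obtain ⟨v, hv⟩ := suppV_nonempty c
    have hvT : v ∉ T := suppV_subset_compl hv
    have hvC : v ∉ C := hc v hv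
    have hvS : v ∉ S := fun h => (hST h).elim hvT hvC
    set c₀ := (G.induce Sᶜ).connectedComponentMk ⟨v, hvS⟩ with hc₀
    have habs : ∀ a ∈ suppV G S c₀ ∪ C, ∀ b, G.Adj a b → b ∉ T → b ∈ suppV G S c₀ ∪ C := by
      rintro a (ha | ha) b hab hbT
      · by_cases hbC : b ∈ C
        · exact Or.inr hbC
        · have hbS : b ∉ S := fun h => (hST h).elim hbT hbC
          exact Or.inl (adj_mem_suppV ha hbS hab)
      · exact Or.inr (hesc a ha b hab hbT)
    have hsub : suppV G T c ⊆ suppV G S c₀ ∪ C :=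
      suppV_subset_of_absorb' ⟨v, hv, Or.inl (mem_suppV.mpr ⟨hvS, rfl⟩)⟩ habs
    have hsub' : suppV G T c ⊆ suppV G S c₀ := by
      intro x hx
      exact (hsub hx).resolve_right (fun h => hc x hx h)
    exact le_trans (Set.ncard_le_ncard hsub' (Set.toFinite _)) (le_trans (suppV_ncard_le c₀) hS)

/-- Removing a redundant vertex increases `ccDel` by at most one. -/
lemma ccDel_erase_redundant {S : Set W} {v : W} (hred : Redundant G S v) :
    ccDel G (S \ {v}) ≤ ccDel G S + 1 := by
  classical
  set T := S \ {v} with hT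
  rw [ccDel_le_iff]
  intro c
  by_cases hvc : v ∈ suppV G T c
  · by_cases hnb : ∃ b, G.Adj v b ∧ b ∉ S
    · obtain ⟨b₀, hb₀adj, hb₀S⟩ := hnb
      set c₀ := (G.induce Sᶜ).connectedComponentMk ⟨b₀, hb₀S⟩ with hc₀
      have hBall : ∀ b, G.Adj v b → b ∉ S → b ∈ suppV G S c₀ := by
        intro b hbadj hbS
        have h1 : (G.induce Sᶜ).connectedComponentMk ⟨b, hbS⟩ ∈
            {d : (G.induce Sᶜ).ConnectedComponent | ∃ w, w ∈ d.supp ∧ G.Adj v ↑w} :=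
          ⟨⟨b, hbS⟩, (ConnectedComponent.mem_supp_iff _ _).mpr rfl, hbadj⟩
        have h2 : c₀ ∈ {d : (G.induce Sᶜ).ConnectedComponent | ∃ w, w ∈ d.supp ∧ G.Adj v ↑w} :=
          ⟨⟨b₀, hb₀S⟩, (ConnectedComponent.mem_supp_iff _ _).mpr rfl, hb₀adj⟩
        have := hred h1 h2
        exact mem_suppV.mpr ⟨hbS, this⟩
      have habs : ∀ a ∈ {v} ∪ suppV G S c₀, ∀ b, G.Adj a b → b ∉ T → b ∈ {v} ∪ suppV G S c₀ := by
        rintro a (ha | ha) b hab hbT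
        · have hav : a = v := ha
          have hab' : G.Adj v b := hav ▸ hab
          have hbv : b ≠ v := fun h => G.irrefl (h ▸ hab')
          have hbS : b ∉ S := fun h => hbT ⟨h, hbv⟩
          exact Or.inr (hBall b hab' hbS)
        · by_cases hbv : b = v
          · exact Or.inl (by simp [hbv])
          · have hbS : b ∉ S := fun h => hbT ⟨h, hbv⟩
            exact Or.inr (adj_mem_suppV ha hbS hab)
      have hsub : suppV G T c ⊆ {v} ∪ suppV G S c₀ :=
        suppV_subset_of_absorb' ⟨v, hvc, Or.inl rfl⟩ habs
      calc (suppV G T c).ncard ≤ ({v} ∪ suppV G S c₀).ncard :=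
              Set.ncard_le_ncard hsub (Set.toFinite _)
        _ ≤ ({v} : Set W).ncard + (suppV G S c₀).ncard := Set.ncard_union_le _ _
        _ ≤ 1 + ccDel G S := by
              rw [Set.ncard_singleton]
              exact Nat.add_le_add_left (suppV_ncard_le c₀) 1
        _ = ccDel G S + 1 := by omega
    · push_neg at hnb
      have habs : ∀ a ∈ ({v} : Set W), ∀ b, G.Adj a b → b ∉ T → b ∈ ({v} : Set W) := by
        intro a ha b hab hbT
        have hav : a = v := ha
        have hab' : G.Adj v b := hav ▸ hab
        have hbv : b ≠ v := fun h => G.irrefl (h ▸ hab')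
        have hbS : b ∉ S := fun h => hbT ⟨h, hbv⟩
        exact absurd (hnb b hab') hbS
      have hsub : suppV G T c ⊆ {v} := suppV_subset_of_absorb' ⟨v, hvc, rfl⟩ habs
      calc (suppV G T c).ncard ≤ ({v} : Set W).ncard :=
              Set.ncard_le_ncard hsub (Set.toFinite _)
        _ ≤ ccDel G S + 1 := by rw [Set.ncard_singleton]; omega
  · obtain ⟨v₀, hv₀⟩ := suppV_nonempty c
    have hv₀T : v₀ ∉ T := suppV_subset_compl hv₀
    have hv₀v : v₀ ≠ v := fun h => hvc (h ▸ hv₀)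
    have hv₀S : v₀ ∉ S := fun h => hv₀T ⟨h, hv₀v⟩
    set c₀ := (G.induce Sᶜ).connectedComponentMk ⟨v₀, hv₀S⟩ with hc₀
    obtain ⟨hv₀T', hv₀eq⟩ := mem_suppV.mp hv₀
    have habs : ∀ a ∈ suppV G S c₀, ∀ b, G.Adj a b → ∀ hb : b ∈ Tᶜ,
        (G.induce Tᶜ).connectedComponentMk ⟨b, hb⟩ = c → b ∈ suppV G S c₀ := by
      intro a ha b hab hb hbc
      by_cases hbv : b = v
      · exact absurd (mem_suppV.mpr ⟨hb, hbc⟩) (by rw [hbv] at *; exact hvc)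
      · have hbS : b ∉ S := fun h => hb ⟨h, hbv⟩
        exact adj_mem_suppV ha hbS hab
    have hsub : suppV G T c ⊆ suppV G S c₀ :=
      suppV_subset_of_absorb ⟨v₀, hv₀, mem_suppV.mpr ⟨hv₀S, rfl⟩⟩ habs
    calc (suppV G T c).ncard ≤ (suppV G S c₀).ncard :=
            Set.ncard_le_ncard hsub (Set.toFinite _)
      _ ≤ ccDel G S + 1 := le_trans (suppV_ncard_le c₀) (by omega)

end StmtSixHelpers

/-- Given, for each `1 ≤ r ≤ |V(G)|`, an `r`-cut decomposition `𝒞 r` of `G`,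
there exists a vi-set `S` of `G` such that (1) `S` contains no redundant vertex, and
(2) there exists `r` such that `S` is a minimum-size modulator for `coc_r(G)` and `S`
together with `𝒞 r` satisfies the two cut-decomposition conditions. -/
theorem stmt_6 {V : Type*} [Fintype V] (G : SimpleGraph V)
    (𝒞 : ℕ → Set (Set V × Set V))
    (h𝒞 : ∀ r : ℕ, 1 ≤ r → r ≤ Fintype.card V → IsRCutDecomp G r (𝒞 r)) :
    ∃ S : Set V, IsViSet G S ∧ (∀ v ∈ S, ¬ Redundant G S v) ∧
      ∃ r : ℕ, IsMinModulator G r S ∧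
        ∀ p ∈ 𝒞 r,
          (openNbhdSet G p.1 \ S ⊆ p.2 → p.1 ∩ S = ∅) ∧
          (openNbhdSet G p.1 \ S ⊆ p.2 → p.1.ncard = r → p.2 ⊆ S) := by
  classical
  -- minimum cardinality of vi-sets
  have hne : {n | ∃ S : Set V, IsViSet G S ∧ S.ncard = n}.Nonempty := by
    obtain ⟨S, hS⟩ := exists_viset G
    exact ⟨S.ncard, S, hS, rfl⟩
  obtain ⟨S₀, hS₀vi, hS₀m⟩ := Nat.sInf_mem hne
  set m := sInf {n | ∃ S : Set V, IsViSet G S ∧ S.ncard = n} with hm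
  set r := ccDel G S₀ with hr
  have hvir : vi G = m + r := by rw [hS₀vi, hS₀m]
  have hccDel_eq : ∀ T : Set V, IsViSet G T → T.ncard = m → ccDel G T = r := by
    intro T h1 h2
    have h1' : vi G = T.ncard + ccDel G T := h1
    omega
  have hfinC : (𝒞 r).Finite := Set.toFinite _
  set F := hfinC.toFinset with hF
  set μ : Set V → ℕ := fun T => ∑ p ∈ F, (T ∩ p.1).ncard with hμ
  have hμne : {n | ∃ T : Set V, (IsViSet G T ∧ T.ncard = m) ∧ μ T = n}.Nonempty :=
    ⟨μ S₀, S₀, ⟨hS₀vi, hS₀m⟩, rfl⟩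
  obtain ⟨S, ⟨hSvi, hSm⟩, hSμ⟩ := Nat.sInf_mem hμne
  have hSr : ccDel G S = r := hccDel_eq S hSvi hSm
  have hmincard : ∀ T : Set V, IsViSet G T → m ≤ T.ncard := fun T hT => Nat.sInf_le ⟨T, hT, rfl⟩
  have hμmin : ∀ T : Set V, IsViSet G T → T.ncard = m → μ S ≤ μ T := by
    intro T h1 h2
    rw [hSμ]
    exact Nat.sInf_le ⟨T, ⟨h1, h2⟩, rfl⟩
  have hmod_ge : ∀ T : Set V, ccDel G T ≤ r → m ≤ T.ncard := by
    intro T hT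
    have h1 := vi_le G T
    omega
  have hnored : ∀ v ∈ S, ¬ Redundant G S v := by
    intro v hv hred
    have h1 : ccDel G (S \ {v}) ≤ r + 1 := by
      have := ccDel_erase_redundant (G := G) hred
      omega
    have h2 := vi_le G (S \ {v})
    have h3 : (S \ {v}).ncard = S.ncard - 1 := by
      rw [Set.ncard_diff (Set.singleton_subset_iff.mpr hv), Set.ncard_singleton]
    have h4 : 1 ≤ S.ncard := (Set.ncard_pos (Set.toFinite _)).mpr ⟨v, hv⟩
    have h5 : IsViSet G (S \ {v}) := by
      show vi G = (S \ {v}).ncard + ccDel G (S \ {v})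
      omega
    have h6 := hmincard _ h5
    omega
  refine ⟨S, hSvi, hnored, r, ⟨le_of_eq hSr, fun T hT => ?_⟩, ?_⟩
  · have hT' : ccDel G T ≤ r := hT
    have := hmod_ge T hT'
    omega
  by_cases hV : IsEmpty V
  · intro p hp
    constructor
    · intro _
      exact Set.eq_empty_of_isEmpty _
    · intro _ _ x hx
      exact (hV.elim x)
  rw [not_isEmpty_iff] at hV
  have hcardV : ∀ T : Set V, ccDel G T ≤ Fintype.card V := by
    intro T
    rw [ccDel_le_iff]
    intro c
    calc (suppV G T c).ncard ≤ (Set.univ : Set V).ncard :=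
          Set.ncard_le_ncard (Set.subset_univ _) (Set.toFinite _)
      _ = Fintype.card V := by rw [Set.ncard_univ, Nat.card_eq_fintype_card]
  have hr2 : r ≤ Fintype.card V := by
    have := hcardV S
    omega
  have hr1 : 1 ≤ r := by
    by_contra h
    have hr0 : r = 0 := by omega
    have hSuniv : S = Set.univ := by
      ext x
      simp only [Set.mem_univ, iff_true]
      by_contra hxS
      have hx : x ∈ Sᶜ := hxS
      have h1 : x ∈ suppV G S ((G.induce Sᶜ).connectedComponentMk ⟨x, hx⟩) :=
        mem_suppV.mpr ⟨hx, rfl⟩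
      have h2 := suppV_ncard_le (G := G) ((G.induce Sᶜ).connectedComponentMk ⟨x, hx⟩)
      rw [hSr, hr0] at h2
      have h3 : (suppV G S ((G.induce Sᶜ).connectedComponentMk ⟨x, hx⟩)).ncard = 0 :=
        le_antisymm h2 (Nat.zero_le _)
      rw [Set.ncard_eq_zero (Set.toFinite _)] at h3
      rw [h3] at h1
      exact h1
    have hcard : m = Fintype.card V := by
      rw [← hSm, hSuniv, Set.ncard_univ, Nat.card_eq_fintype_card]
    have hvempty : IsViSet G (∅ : Set V) := by
      have h1 := vi_le G (∅ : Set V)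
      have h2 := hcardV (∅ : Set V)
      show vi G = (∅ : Set V).ncard + ccDel G (∅ : Set V)
      rw [Set.ncard_empty] at *
      omega
    have h9 := hmincard ∅ hvempty
    rw [Set.ncard_empty] at h9
    have h10 : 0 < Fintype.card V := Fintype.card_pos
    omega
  have hdec := h𝒞 r hr1 hr2
  -- single-component consequence of the connectivity requirement
  have hcompone : ∀ C' cut' : Set V, cut'.ncard ≤ conn G (C' ∪ cut') →
      (S ∩ (C' ∪ cut')).ncard < cut'.ncard →
      Nat.card ((G.induce ((C' ∪ cut') \ S)).ConnectedComponent) ≤ 1 := by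
    intro C' cut' hconn hlt
    by_contra hgt
    push_neg at hgt
    have hXset : (C' ∪ cut') \ (S ∩ (C' ∪ cut')) = (C' ∪ cut') \ S := by
      ext x; simp only [Set.mem_diff, Set.mem_inter_iff]; tauto
    have h2 : conn G (C' ∪ cut') ≤ (S ∩ (C' ∪ cut')).ncard :=
      Nat.sInf_le ⟨S ∩ (C' ∪ cut'), Set.inter_subset_right, rfl, by rw [hXset]; exact hgt⟩
    omega
  -- Condition 1
  have cond1 : ∀ p ∈ 𝒞 r, openNbhdSet G p.1 \ S ⊆ p.2 → p.1 ∩ S = ∅ := by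
    intro p hp hNsub
    obtain ⟨hCr, hcutN, hconn, _⟩ := hdec p hp
    by_contra hneq
    obtain ⟨v, hvC, hvS⟩ := Set.nonempty_iff_ne_empty.mpr hneq
    rcases lt_or_ge (S ∩ (p.1 ∪ p.2)).ncard p.2.ncard with hlt | hge
    · -- v is redundant: contradiction
      have hcard1 := hcompone p.1 p.2 hconn hlt
      refine hnored v hvS ?_
      intro c1 hc1 c2 hc2
      obtain ⟨w1, hw1s, hw1a⟩ := hc1
      obtain ⟨w2, hw2s, hw2a⟩ := hc2
      have hw1X : (↑w1 : V) ∈ (p.1 ∪ p.2) \ S := by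
        refine ⟨?_, w1.2⟩
        by_cases h : (↑w1 : V) ∈ p.1
        · exact Or.inl h
        · exact Or.inr (hNsub ⟨mem_openNbhdSet'_s6.mpr ⟨⟨v, hvC, hw1a⟩, h⟩, w1.2⟩)
      have hw2X : (↑w2 : V) ∈ (p.1 ∪ p.2) \ S := by
        refine ⟨?_, w2.2⟩
        by_cases h : (↑w2 : V) ∈ p.1
        · exact Or.inl h
        · exact Or.inr (hNsub ⟨mem_openNbhdSet'_s6.mpr ⟨⟨v, hvC, hw2a⟩, h⟩, w2.2⟩)
      have hreach := reachable_mono (show (p.1 ∪ p.2) \ S ⊆ Sᶜ from fun x hx => hx.2)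
        (reachable_of_card_le hcard1 ⟨↑w1, hw1X⟩ ⟨↑w2, hw2X⟩)
      have h12 : (G.induce Sᶜ).Reachable w1 w2 := hreach
      have e1 : (G.induce Sᶜ).connectedComponentMk w1 = c1 :=
        (ConnectedComponent.mem_supp_iff _ _).mp hw1s
      have e2 : (G.induce Sᶜ).connectedComponentMk w2 = c2 :=
        (ConnectedComponent.mem_supp_iff _ _).mp hw2s
      rw [← e1, ← e2]
      exact (ConnectedComponent.eq).mpr h12
    · -- exchange argument
      set X := p.1 ∪ p.2 with hX
      set T := (S \ X) ∪ p.2 with hTdef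
      have hTmod : ccDel G T ≤ r :=
        ccDel_swap (le_of_eq hSr) hCr hcutN hNsub
      have hd1 : Disjoint (S \ X) p.2 := by
        rw [Set.disjoint_left]
        intro x hx hxc
        exact hx.2 (Or.inr hxc)
      have hTcard : T.ncard = (S \ X).ncard + p.2.ncard :=
        Set.ncard_union_eq hd1 (Set.toFinite _) (Set.toFinite _)
      have hdiff : (S \ X).ncard = S.ncard - (S ∩ X).ncard := by
        rw [← Set.diff_self_inter]
        exact Set.ncard_diff Set.inter_subset_left (Set.toFinite _)
      have hSXle : (S ∩ X).ncard ≤ S.ncard :=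
        Set.ncard_le_ncard Set.inter_subset_left (Set.toFinite _)
      have hTm : m ≤ T.ncard := hmod_ge T hTmod
      have hTeq : T.ncard = m := by omega
      have hacb : (S ∩ X).ncard = p.2.ncard := by omega
      have hCcutdisj : ∀ x, x ∈ p.1 → x ∈ p.2 → False :=
        fun x hxC hxcut => (mem_openNbhdSet'_s6.mp (hcutN hxcut)).2 hxC
      have h7 : (S ∩ X).ncard = (S ∩ p.1).ncard + (S ∩ p.2).ncard := by
        rw [show S ∩ X = (S ∩ p.1) ∪ (S ∩ p.2) by rw [hX, Set.inter_union_distrib_left]]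
        refine Set.ncard_union_eq ?_ (Set.toFinite _) (Set.toFinite _)
        rw [Set.disjoint_left]
        rintro x ⟨_, hxC⟩ ⟨_, hxcut⟩
        exact hCcutdisj x hxC hxcut
      have h8 : (p.2 ∩ S).ncard + (p.2 \ S).ncard = p.2.ncard :=
        Set.ncard_inter_add_ncard_diff_eq_ncard p.2 S (Set.toFinite _)
      have h8' : (p.2 ∩ S).ncard = (S ∩ p.2).ncard := by rw [Set.inter_comm]
      have hk : (p.2 \ S).ncard = (S ∩ p.1).ncard := by omega
      have hTvi : IsViSet G T := by
        have h9 := vi_le G T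
        show vi G = T.ncard + ccDel G T
        omega
      have hTCempty : T ∩ p.1 = ∅ := by
        ext x
        simp only [Set.mem_inter_iff, Set.mem_empty_iff_false, iff_false]
        rintro ⟨hxT, hxC⟩
        rcases hxT with ⟨_, hxX⟩ | hxcut
        · exact hxX (Or.inl hxC)
        · exact hCcutdisj x hxC hxcut
      have hμlt : μ T < μ S := by
        show (∑ q ∈ F, (T ∩ q.1).ncard) < ∑ q ∈ F, (S ∩ q.1).ncard
        apply Finset.sum_lt_sum
        · intro q hqF
          have hq : q ∈ 𝒞 r := hfinC.mem_toFinset.mp hqF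
          obtain ⟨_, _, _, hdq⟩ := hdec q hq
          rcases hdq p hp with hzero | hsub
          · refine Set.ncard_le_ncard ?_ (Set.toFinite _)
            rintro x ⟨hxT, hxq⟩
            rcases hxT with ⟨hxS, _⟩ | hxcut
            · exact ⟨hxS, hxq⟩
            · have hc : x ∈ q.1 ∩ p.2 := ⟨hxq, hxcut⟩
              rw [hzero] at hc
              exact hc.elim
          · -- p.1 ⊆ q.1
            have e1 : T ∩ q.1 ⊆ (((S \ X) ∩ q.1) ∪ ((S ∩ p.2) ∩ q.1)) ∪ (p.2 \ S) := by
              rintro x ⟨hxT, hxq⟩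
              rcases hxT with hxa | hxcut
              · exact Or.inl (Or.inl ⟨hxa, hxq⟩)
              · by_cases hxS : x ∈ S
                · exact Or.inl (Or.inr ⟨⟨hxS, hxcut⟩, hxq⟩)
                · exact Or.inr ⟨hxcut, hxS⟩
            have e2 : (((S \ X) ∩ q.1) ∪ ((S ∩ p.2) ∩ q.1)) ∪ (S ∩ p.1) ⊆ S ∩ q.1 := by
              rintro x ((⟨⟨hxS, _⟩, hxq⟩ | ⟨⟨hxS, _⟩, hxq⟩) | ⟨hxS, hxC⟩)
              · exact ⟨hxS, hxq⟩
              · exact ⟨hxS, hxq⟩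
              · exact ⟨hxS, hsub hxC⟩
            have d12 : Disjoint ((S \ X) ∩ q.1) ((S ∩ p.2) ∩ q.1) := by
              rw [Set.disjoint_left]
              rintro x ⟨⟨_, hxX⟩, _⟩ ⟨⟨_, hxcut⟩, _⟩
              exact hxX (Or.inr hxcut)
            have d3 : Disjoint (((S \ X) ∩ q.1) ∪ ((S ∩ p.2) ∩ q.1)) (S ∩ p.1) := by
              rw [Set.disjoint_left]
              rintro x (⟨⟨_, hxX⟩, _⟩ | ⟨⟨_, hxcut⟩, _⟩) ⟨_, hxC⟩
              · exact hxX (Or.inl hxC)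
              · exact hCcutdisj x hxC hxcut
            have hcount : ((S \ X) ∩ q.1).ncard + ((S ∩ p.2) ∩ q.1).ncard + (S ∩ p.1).ncard
                ≤ (S ∩ q.1).ncard := by
              calc ((S \ X) ∩ q.1).ncard + ((S ∩ p.2) ∩ q.1).ncard + (S ∩ p.1).ncard
                  = ((((S \ X) ∩ q.1) ∪ ((S ∩ p.2) ∩ q.1)) ∪ (S ∩ p.1)).ncard := by
                    rw [Set.ncard_union_eq d3 (Set.toFinite _) (Set.toFinite _),
                      Set.ncard_union_eq d12 (Set.toFinite _) (Set.toFinite _)]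
                _ ≤ (S ∩ q.1).ncard := Set.ncard_le_ncard e2 (Set.toFinite _)
            have htop : (T ∩ q.1).ncard ≤
                ((S \ X) ∩ q.1).ncard + ((S ∩ p.2) ∩ q.1).ncard + (p.2 \ S).ncard := by
              calc (T ∩ q.1).ncard
                  ≤ ((((S \ X) ∩ q.1) ∪ ((S ∩ p.2) ∩ q.1)) ∪ (p.2 \ S)).ncard :=
                    Set.ncard_le_ncard e1 (Set.toFinite _)
                _ ≤ (((S \ X) ∩ q.1) ∪ ((S ∩ p.2) ∩ q.1)).ncard + (p.2 \ S).ncard :=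
                    Set.ncard_union_le _ _
                _ ≤ ((S \ X) ∩ q.1).ncard + ((S ∩ p.2) ∩ q.1).ncard + (p.2 \ S).ncard :=
                    Nat.add_le_add_right (Set.ncard_union_le _ _) _
            omega
        · refine ⟨p, hfinC.mem_toFinset.mpr hp, ?_⟩
          rw [hTCempty, Set.ncard_empty]
          exact (Set.ncard_pos (Set.toFinite _)).mpr ⟨v, hvS, hvC⟩
      have := hμmin T hTvi hTeq
      omega
  -- assemble the two conditions
  intro p hp
  refine ⟨cond1 p hp, ?_⟩
  intro hNsub hCcard
  obtain ⟨hCr, hcutN, hconn, _⟩ := hdec p hp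
  have hCS := cond1 p hp hNsub
  intro y hy
  by_contra hyS
  rcases lt_or_ge (S ∩ (p.1 ∪ p.2)).ncard p.2.ncard with hlt | hge
  · have hcard1 := hcompone p.1 p.2 hconn hlt
    have hyX : y ∈ (p.1 ∪ p.2) \ S := ⟨Or.inr hy, hyS⟩
    have hyS' : y ∈ Sᶜ := hyS
    have hsubXS : (p.1 ∪ p.2) \ S ⊆
        suppV G S ((G.induce Sᶜ).connectedComponentMk ⟨y, hyS'⟩) := by
      intro x hx
      have hre := reachable_mono (show (p.1 ∪ p.2) \ S ⊆ Sᶜ from fun z hz => hz.2)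
        (reachable_of_card_le hcard1 ⟨x, hx⟩ ⟨y, hyX⟩)
      exact mem_suppV.mpr ⟨hx.2, (ConnectedComponent.eq).mpr hre⟩
    have hCmem : ∀ x ∈ p.1, x ∈ (p.1 ∪ p.2) \ S := by
      intro x hx
      refine ⟨Or.inl hx, fun hxS => ?_⟩
      have : x ∈ p.1 ∩ S := ⟨hx, hxS⟩
      rw [hCS] at this
      exact this
    have hins : insert y p.1 ⊆ suppV G S ((G.induce Sᶜ).connectedComponentMk ⟨y, hyS'⟩) := by
      intro x hx
      rcases Set.mem_insert_iff.mp hx with rfl | hxC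
      · exact hsubXS hyX
      · exact hsubXS (hCmem x hxC)
    have hyC : y ∉ p.1 := (mem_openNbhdSet'_s6.mp (hcutN hy)).2
    have hle := le_trans (Set.ncard_le_ncard hins (Set.toFinite _))
      (le_trans (suppV_ncard_le _) (le_of_eq hSr))
    rw [Set.ncard_insert_of_notMem hyC (Set.toFinite _), hCcard] at hle
    omega
  · have hXS : S ∩ (p.1 ∪ p.2) ⊆ p.2 := by
      rintro x ⟨hxS, hxX⟩
      rcases hxX with hxC | hxcut
      · have : x ∈ p.1 ∩ S := ⟨hxC, hxS⟩
        rw [hCS] at this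
        exact this.elim
      · exact hxcut
    have heq := Set.eq_of_subset_of_ncard_le hXS hge (Set.toFinite _)
    rw [← heq] at hy
    exact hyS hy.1

end ParamReport
end

section
/- Let G be a finite simple undirected graph, let (G1, G2) be a simple decomposition of G, and let {u, v} be an edge of G that is also an edge of G1. If there is a split (W1, W2) of G1 with u ∈ W1 and v ∈ W2, then there is a split of G that is crossed by the edge {u, v}. -/
namespace ParamReport

open SimpleGraph

variable {V : Type*} {U : Type*}

/-- Let `(G1, G2)` be a simple decomposition of `G` (with vertex set `A`)
with respect to a split `(V1, V2)` and marker `x`, and let `{u, v}` be an edge of `G`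
that is also an edge of `G1`. If there is a split `(W1, W2)` of `G1` with `u ∈ W1` and
`v ∈ W2`, then there is a split of `G` crossed by `{u, v}`. -/
theorem stmt_7 {U : Type*} [Fintype U] (G G1 G2 : SimpleGraph U) (A : Set U)
    (hGA : EdgesWithin G A)
    (V1 V2 : Set U) (x : U)
    (hsplit : IsSplit G A V1 V2)
    (hdec : IsSimpleDecompWrt G A V1 V2 G1 G2 x)
    (u v : U) (huvG : G.Adj u v) (huvG1 : G1.Adj u v)
    (W1 W2 : Set U) (hW : IsSplit G1 (V1 ∪ {x}) W1 W2)
    (hu : u ∈ W1) (hv : v ∈ W2) :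
    ∃ P Q : Set U, IsSplit G A P Q ∧ ((u ∈ P ∧ v ∈ Q) ∨ (u ∈ Q ∧ v ∈ P)) := by
  obtain ⟨hA, hVd, hV1c, hV2c, hVsame⟩ := hsplit
  obtain ⟨hxA, hE1, hE2, h4, h5, h6, h7⟩ := hdec
  obtain ⟨hWA, hWd, hW1c, hW2c, hWsame⟩ := hW
  obtain ⟨huA, hvA⟩ := hGA u v huvG
  have hux : u ≠ x := by rintro rfl; exact hxA huA
  have hvx : v ≠ x := by rintro rfl; exact hxA hvA
  have hV1x : x ∉ V1 := fun h => hxA (hA ▸ (Set.mem_union_left V2 h))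
  have hV2x : x ∉ V2 := fun h => hxA (hA ▸ (Set.mem_union_right V1 h))
  have memV1 : ∀ a, a ∈ W1 ∪ W2 → a ≠ x → a ∈ V1 := by
    intro a ha hax
    have h : a ∈ V1 ∪ {x} := hWA ▸ ha
    rcases h with h | h
    · exact h
    · exact absurd h hax
  have huV1 : u ∈ V1 := memV1 u (Or.inl hu) hux
  have hvV1 : v ∈ V1 := memV1 v (Or.inr hv) hvx
  -- adjacency in G1 between V1 vertices equals adjacency in G
  have hadj : ∀ a ∈ V1, ∀ b ∈ V1, (G1.Adj a b ↔ G.Adj a b) := h4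
  -- marker adjacency
  have hmark : ∀ a ∈ V1, (G1.Adj a x ↔ ∃ w ∈ V2, G.Adj a w) := by
    intro a ha
    rw [adj_comm, h6]
    simp [ha]
  have hxmem : x ∈ W1 ∪ W2 := by rw [hWA]; exact Set.mem_union_right V1 rfl
  rcases hxmem with hxW1 | hxW2
  · -- x ∈ W1 : take P = (W1 \ {x}) ∪ V2, Q = W2
    have hxW2 : x ∉ W2 := Set.disjoint_left.mp hWd hxW1
    have hW2V1 : W2 ⊆ V1 := fun a ha =>
      memV1 a (Or.inr ha) (by rintro rfl; exact hxW2 ha)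
    have hV1eq : (W1 \ {x}) ∪ W2 = V1 := by
      ext a
      constructor
      · rintro (⟨ha, hax⟩ | ha)
        · exact memV1 a (Or.inl ha) (by simpa using hax)
        · exact hW2V1 ha
      · intro ha
        have hax : a ≠ x := by rintro rfl; exact hV1x ha
        have : a ∈ W1 ∪ W2 := by rw [hWA]; exact Or.inl ha
        rcases this with h | h
        · exact Or.inl ⟨h, by simpa using hax⟩
        · exact Or.inr h
    refine ⟨(W1 \ {x}) ∪ V2, W2, ⟨?_, ?_, ?_, ?_, ?_⟩, Or.inl ⟨Or.inl ⟨hu, by simpa using hux⟩, hv⟩⟩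
    · rw [Set.union_right_comm, hV1eq, hA]
    · refine Set.disjoint_union_left.mpr ⟨hWd.mono_left Set.diff_subset, ?_⟩
      exact (hVd.symm).mono_right hW2V1
    · calc 2 ≤ V2.ncard := hV2c
        _ ≤ ((W1 \ {x}) ∪ V2).ncard :=
          Set.ncard_le_ncard Set.subset_union_right (Set.toFinite _)
    · exact hW2c
    -- the split neighborhood condition
    · have key : (∃ a ∈ W2, G1.Adj x a) →
          ∀ p, p ∈ (W1 \ {x}) ∪ V2 → (∃ a ∈ W2, G.Adj p a) →
          ∀ c ∈ W2, (G.Adj p c ↔ G1.Adj x c) := by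
        intro hxN p hp ⟨a, haW2, hpa⟩ c hcW2
        have haV1 : a ∈ V1 := hW2V1 haW2
        have hcV1 : c ∈ V1 := hW2V1 hcW2
        rcases hp with ⟨hpW1, hpx⟩ | hpV2
        · have hpV1 : p ∈ V1 := memV1 p (Or.inl hpW1) (by simpa using hpx)
          have hpN : ∃ b ∈ W2, G1.Adj p b :=
            ⟨a, haW2, (hadj p hpV1 a haV1).mpr hpa⟩
          have := hWsame p hpW1 x hxW1 hpN hxN c hcW2
          rw [← this, hadj p hpV1 c hcV1]
        · constructor
          · intro hpc
            rw [h6]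
            exact ⟨hcV1, p, hpV2, hpc.symm⟩
          · intro hxc
            rw [h6] at hxc
            obtain ⟨-, w, hwV2, hcw⟩ := hxc
            have h1 : ∃ b ∈ V2, G.Adj a b := ⟨p, hpV2, hpa.symm⟩
            have h2 : ∃ b ∈ V2, G.Adj c b := ⟨w, hwV2, hcw⟩
            have := hVsame a haV1 c hcV1 h1 h2 p hpV2
            exact (this.mp hpa.symm).symm
      intro p hp q hq hpN hqN c hcW2
      have hcV1 : c ∈ V1 := hW2V1 hcW2
      have hV2x' : ∀ r, r ∈ V2 → (∃ a ∈ W2, G.Adj r a) → ∃ a ∈ W2, G1.Adj x a := by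
        rintro r hrV2 ⟨a, haW2, hra⟩
        refine ⟨a, haW2, ?_⟩
        rw [h6]
        exact ⟨hW2V1 haW2, r, hrV2, hra.symm⟩
      by_cases hxN : ∃ a ∈ W2, G1.Adj x a
      · rw [key hxN p hp hpN c hcW2, key hxN q hq hqN c hcW2]
      · -- then p, q must both be in W1 \ {x}
        have hp' : p ∈ W1 \ {x} := by
          rcases hp with h | h
          · exact h
          · exact absurd (hV2x' p h hpN) hxN
        have hq' : q ∈ W1 \ {x} := by
          rcases hq with h | h
          · exact h
          · exact absurd (hV2x' q h hqN) hxN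
        have hpV1 : p ∈ V1 := memV1 p (Or.inl hp'.1) (by simpa using hp'.2)
        have hqV1 : q ∈ V1 := memV1 q (Or.inl hq'.1) (by simpa using hq'.2)
        obtain ⟨a, haW2, hpa⟩ := hpN
        obtain ⟨b, hbW2, hqb⟩ := hqN
        have hpN1 : ∃ b ∈ W2, G1.Adj p b :=
          ⟨a, haW2, (hadj p hpV1 a (hW2V1 haW2)).mpr hpa⟩
        have hqN1 : ∃ b ∈ W2, G1.Adj q b :=
          ⟨b, hbW2, (hadj q hqV1 b (hW2V1 hbW2)).mpr hqb⟩
        have := hWsame p hp'.1 q hq'.1 hpN1 hqN1 c hcW2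
        rw [← hadj p hpV1 c hcV1, ← hadj q hqV1 c hcV1]
        exact this
  · -- x ∈ W2 : take P = W1, Q = (W2 \ {x}) ∪ V2
    have hxW1 : x ∉ W1 := Set.disjoint_right.mp hWd hxW2
    have hW1V1 : W1 ⊆ V1 := fun a ha =>
      memV1 a (Or.inl ha) (by rintro rfl; exact hxW1 ha)
    have hV1eq : W1 ∪ (W2 \ {x}) = V1 := by
      ext a
      constructor
      · rintro (ha | ⟨ha, hax⟩)
        · exact hW1V1 ha
        · exact memV1 a (Or.inr ha) (by simpa using hax)
      · intro ha
        have hax : a ≠ x := by rintro rfl; exact hV1x ha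
        have : a ∈ W1 ∪ W2 := by rw [hWA]; exact Or.inl ha
        rcases this with h | h
        · exact Or.inl h
        · exact Or.inr ⟨h, by simpa using hax⟩
    refine ⟨W1, (W2 \ {x}) ∪ V2, ⟨?_, ?_, ?_, ?_, ?_⟩,
      Or.inl ⟨hu, Or.inl ⟨hv, by simpa using hvx⟩⟩⟩
    · rw [← Set.union_assoc, hV1eq, hA]
    · refine Set.disjoint_union_right.mpr ⟨hWd.mono_right Set.diff_subset, ?_⟩
      exact hVd.mono_left hW1V1
    · exact hW1c
    · calc 2 ≤ V2.ncard := hV2c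
        _ ≤ ((W2 \ {x}) ∪ V2).ncard :=
          Set.ncard_le_ncard Set.subset_union_right (Set.toFinite _)
    · intro p hpW1 q hqW1 hpN hqN c hc
      have hpV1 : p ∈ V1 := hW1V1 hpW1
      have hqV1 : q ∈ V1 := hW1V1 hqW1
      -- transfer neighbors in Q to G1-neighbors in W2
      have trans : ∀ r, r ∈ V1 → (∃ a ∈ (W2 \ {x}) ∪ V2, G.Adj r a) →
          ∃ a ∈ W2, G1.Adj r a := by
        rintro r hrV1 ⟨a, ha, hra⟩
        rcases ha with ⟨haW2, hax⟩ | haV2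
        · have haV1 : a ∈ V1 := memV1 a (Or.inr haW2) (by simpa using hax)
          exact ⟨a, haW2, (hadj r hrV1 a haV1).mpr hra⟩
        · exact ⟨x, hxW2, ((hmark r hrV1).mpr ⟨a, haV2, hra⟩)⟩
      have hpN1 := trans p hpV1 hpN
      have hqN1 := trans q hqV1 hqN
      have key := hWsame p hpW1 q hqW1 hpN1 hqN1
      rcases hc with ⟨hcW2, hcx⟩ | hcV2
      · have hcV1 : c ∈ V1 := memV1 c (Or.inr hcW2) (by simpa using hcx)
        rw [← hadj p hpV1 c hcV1, ← hadj q hqV1 c hcV1]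
        exact key c hcW2
      · have hx := key x hxW2
        rw [hmark p hpV1, hmark q hqV1] at hx
        by_cases hpv2 : ∃ w ∈ V2, G.Adj p w
        · exact hVsame p hpV1 q hqV1 hpv2 (hx.mp hpv2) c hcV2
        · constructor
          · intro h; exact absurd ⟨c, hcV2, h⟩ hpv2
          · intro h; exact absurd ⟨c, hcV2, h⟩ (fun h' => hpv2 (hx.mpr h'))

end ParamReport
end

section
/- Let G be a finite simple undirected graph, let S be a vi-set of G, and let v ∈ S be a redundant vertex with respect to S. Then cc(G − (S \ {v})) = cc(G − S) + 1. -/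
namespace ParamReport

open SimpleGraph

variable {V : Type*} {U : Type*}

lemma cc_bddAbove {W : Type*} [Finite W] (H : SimpleGraph W) :
    BddAbove {n | ∃ c : H.ConnectedComponent, n = c.supp.ncard} := by
  refine ⟨Nat.card W, ?_⟩
  rintro n ⟨c, rfl⟩
  simpa [Set.ncard_univ] using Set.ncard_le_ncard (Set.subset_univ c.supp) Set.finite_univ

lemma comp_le_cc {W : Type*} [Finite W] (H : SimpleGraph W) (c : H.ConnectedComponent) :
    c.supp.ncard ≤ cc H :=
  le_csSup (cc_bddAbove H) ⟨c, rfl⟩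

lemma cc_le {W : Type*} (H : SimpleGraph W) {m : ℕ}
    (h : ∀ c : H.ConnectedComponent, c.supp.ncard ≤ m) : cc H ≤ m := by
  rcases Set.eq_empty_or_nonempty {n | ∃ c : H.ConnectedComponent, n = c.supp.ncard} with he | hne
  · simp [cc, he]
  · exact csSup_le hne (by rintro n ⟨c, rfl⟩; exact h c)

section Key
variable (G : SimpleGraph V) (S : Set V) (v : V)

/-- transfer a non-`v` vertex of `(S \ {v})ᶜ` to `Sᶜ`. -/
def toH (u : ((S \ {v})ᶜ : Set V)) (hu : (u : V) ≠ v) : (Sᶜ : Set V) :=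
  ⟨u, fun h => u.2 ⟨h, hu⟩⟩

lemma key (hred : Redundant G S v) :
    ∀ (u w : ((S \ {v})ᶜ : Set V)) (p : (G.induce ((S \ {v})ᶜ : Set V)).Walk u w)
      (hw : (w : V) ≠ v),
      ((u : V) = v → (G.induce (Sᶜ : Set V)).connectedComponentMk (toH S v w hw) ∈
        {c : (G.induce (Sᶜ : Set V)).ConnectedComponent | ∃ x, x ∈ c.supp ∧ G.Adj v ↑x}) ∧
      (∀ hu : (u : V) ≠ v,
        (G.induce (Sᶜ : Set V)).connectedComponentMk (toH S v u hu) =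
        (G.induce (Sᶜ : Set V)).connectedComponentMk (toH S v w hw)) := by
  intro u w p
  induction p with
  | nil =>
    intro hw
    exact ⟨fun h => absurd h hw, fun hu => rfl⟩
  | @cons a x w h q ih =>
    intro hw
    by_cases hx : (x : V) = v
    · -- a is adjacent to v; a ≠ v
      have ha : (a : V) ≠ v := by
        intro hav
        exact G.loopless.irrefl v (by simpa [hav, hx] using (comap_adj.mp h : G.Adj a x))
      have hadj : G.Adj v a := by
        have : G.Adj (a : V) x := comap_adj.mp h
        rw [hx] at this; exact this.symm
      have hmem : (G.induce (Sᶜ : Set V)).connectedComponentMk (toH S v a ha) ∈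
          {c : (G.induce (Sᶜ : Set V)).ConnectedComponent | ∃ y, y ∈ c.supp ∧ G.Adj v ↑y} :=
        ⟨toH S v a ha, by simp [ConnectedComponent.mem_supp_iff], hadj⟩
      have hw' := (ih hw).1 hx
      refine ⟨fun hav => absurd hav ha, fun hu => ?_⟩
      exact hred hmem hw'
    · -- x ≠ v
      have ihx := (ih hw).2 hx
      constructor
      · intro hav
        -- a = v, so x is a neighbor of v
        have hadj : G.Adj v x := by
          have : G.Adj (a : V) x := comap_adj.mp h
          rw [hav] at this; exact this
        rw [← ihx]
        exact ⟨toH S v x hx, by simp [ConnectedComponent.mem_supp_iff], hadj⟩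
      · intro hu
        rw [← ihx]
        have : (G.induce (Sᶜ : Set V)).Adj (toH S v a hu) (toH S v x hx) := by
          exact comap_adj.mpr (comap_adj.mp h)
        exact ConnectedComponent.connectedComponentMk_eq_of_adj this

end Key

/-- If `S` is a vi-set of `G` and `v ∈ S` is a redundant vertex with
respect to `S`, then `cc(G − (S \ {v})) = cc(G − S) + 1`. -/
theorem stmt_11 {V : Type*} [Fintype V] (G : SimpleGraph V) (S : Set V) (v : V)
    (hS : IsViSet G S) (hv : v ∈ S) (hred : Redundant G S v) :
    ccDel G (S \ {v}) = ccDel G S + 1 := by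
  have hcard : (S \ {v}).ncard + 1 = S.ncard :=
    Set.ncard_diff_singleton_add_one hv (Set.toFinite S)
  -- lower bound
  have hlow : ccDel G S + 1 ≤ ccDel G (S \ {v}) := by
    have h1 : vi G ≤ (S \ {v}).ncard + ccDel G (S \ {v}) := Nat.sInf_le ⟨S \ {v}, rfl⟩
    rw [hS] at h1
    omega
  -- upper bound
  have hup : ccDel G (S \ {v}) ≤ ccDel G S + 1 := by
    refine cc_le _ ?_
    intro c
    have hvmem : v ∈ ((S \ {v})ᶜ : Set V) := fun h => h.2 rfl
    set vv : ((S \ {v})ᶜ : Set V) := ⟨v, hvmem⟩ with hvv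
    by_cases hsub : c.supp ⊆ {vv}
    · calc c.supp.ncard ≤ ({vv} : Set _).ncard := Set.ncard_le_ncard hsub (Set.toFinite _)
      _ = 1 := Set.ncard_singleton _
      _ ≤ ccDel G S + 1 := le_add_self
    · replace hsub := hsub
      obtain ⟨u0, hu0, hu0v⟩ := Set.not_subset.mp hsub
      have hu0v' : (u0 : V) ≠ v := fun h => hu0v (Subtype.ext h)
      set D := (G.induce (Sᶜ : Set V)).connectedComponentMk (toH S v u0 hu0v') with hD
      -- injection from c.supp \ {vv} into D.supp
      have hmap : ∀ u (hu : u ∈ c.supp \ {vv}),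
          ∃ hu' : (u : V) ≠ v, toH S v u hu' ∈ D.supp := by
        rintro u ⟨huc, huv⟩
        have hu' : (u : V) ≠ v := fun h => huv (Subtype.ext h)
        refine ⟨hu', ?_⟩
        -- u and u0 reachable in H'
        have hr : (G.induce ((S \ {v})ᶜ : Set V)).Reachable u u0 := by
          rw [ConnectedComponent.mem_supp_iff] at huc hu0
          exact ConnectedComponent.exact (huc.trans hu0.symm)
        obtain ⟨p⟩ := hr
        rw [ConnectedComponent.mem_supp_iff]
        exact (key G S v hred u u0 p hu0v').2 hu'
      have hinj : Set.InjOn (fun u : ((S \ {v})ᶜ : Set V) => (u : V)) (c.supp \ {vv}) :=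
        fun a _ b _ h => Subtype.ext h
      have h1 : (c.supp \ {vv}).ncard ≤ D.supp.ncard := by
        have : ((fun u : ((S \ {v})ᶜ : Set V) => (u : V)) '' (c.supp \ {vv})).ncard
            ≤ (((↑) : (Sᶜ : Set V) → V) '' D.supp).ncard := by
          refine Set.ncard_le_ncard ?_ (Set.toFinite _)
          rintro x ⟨u, hu, rfl⟩
          obtain ⟨hu', hmem⟩ := hmap u hu
          exact ⟨toH S v u hu', hmem, rfl⟩
        rwa [Set.ncard_image_of_injOn hinj,
          Set.ncard_image_of_injective _ Subtype.val_injective] at this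
      have h2 : c.supp.ncard ≤ (c.supp \ {vv}).ncard + 1 := by
        have := Set.ncard_diff_singleton_add_one (s := c.supp ∪ {vv}) (a := vv)
          (Set.mem_union_right _ rfl) (Set.toFinite _)
        have h3 : c.supp.ncard ≤ (c.supp ∪ {vv}).ncard :=
          Set.ncard_le_ncard Set.subset_union_left (Set.toFinite _)
        have h4 : (c.supp ∪ {vv}) \ {vv} ⊆ c.supp \ {vv} := by
          rintro x ⟨hx, hxv⟩
          rcases hx with hx | hx
          · exact ⟨hx, hxv⟩
          · exact absurd hx hxv
        have h5 : ((c.supp ∪ {vv}) \ {vv}).ncard ≤ (c.supp \ {vv}).ncard :=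
          Set.ncard_le_ncard h4 (Set.toFinite _)
        omega
      have h3 : D.supp.ncard ≤ ccDel G S := comp_le_cc _ D
      omega
  omega


end ParamReport
end
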